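/- arXiv:2105.09905 — 18 statements merged into one kernel-verified Lean document; each statement's English description precedes it below -/
import Mathlib

section
/- (Generalized Bolzano–Weierstrass theorem / Zarankiewicz) Let X be a separable metrizable topological space. Then every sequence (Kₙ)_{n∈ℕ} of subsets of X has a subsequence that converges in the sense of Kuratowski, i.e., there is an infinite set A ⊆ ℕ such that Li (Kₙ)_{n∈A} = Ls (Kₙ)_{n∈A}. -/
open Set Topology TopologicalSpace

/-- Lower closed limit (Kuratowski) of the subsequence of `K` indexed by the
infinite set `A ⊆ ℕ`, with respect to the topology `t`: points all of whose
open neighborhoods meet `K n` for all but finitely many `n ∈ A`. -/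
def kurLi {X : Type*} (t : TopologicalSpace X) (K : ℕ → Set X) (A : Set ℕ) : Set X :=
  {x | ∀ U : Set X, IsOpen[t] U → x ∈ U → {n ∈ A | U ∩ K n = ∅}.Finite}

/-- Upper closed limit (Kuratowski): points all of whose open neighborhoods
meet `K n` for infinitely many `n ∈ A`. -/
def kurLs {X : Type*} (t : TopologicalSpace X) (K : ℕ → Set X) (A : Set ℕ) : Set X :=
  {x | ∀ U : Set X, IsOpen[t] U → x ∈ U → {n ∈ A | (U ∩ K n).Nonempty}.Infinite}

/-- A family of subsets of `ℕ` is splitting if every infinite `A ⊆ ℕ` is split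
by some member of the family. -/
def IsSplittingFamily (S : Set (Set ℕ)) : Prop :=
  ∀ A : Set ℕ, A.Infinite → ∃ s ∈ S, (A ∩ s).Infinite ∧ (A \ s).Infinite

/-- Generalized Bolzano–Weierstrass theorem (Zarankiewicz): every sequence of
subsets of a separable metrizable space has a Kuratowski-convergent subsequence. -/
theorem stmt0 {X : Type*} [t : TopologicalSpace X] [SeparableSpace X]
    [MetrizableSpace X] (K : ℕ → Set X) :
    ∃ A : Set ℕ, A.Infinite ∧ kurLi t K A = kurLs t K A := by
  letI : MetricSpace X := TopologicalSpace.metrizableSpaceMetric X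
  haveI : SecondCountableTopology X := UniformSpace.secondCountable_of_separable X
  obtain ⟨b, hbc, -, hb⟩ := TopologicalSpace.exists_countable_basis X
  obtain ⟨B, hB⟩ := (hbc.insert (∅ : Set X)).exists_eq_range ⟨∅, mem_insert _ _⟩
  have hBopen : ∀ i, IsOpen (B i) := by
    intro i
    have : B i ∈ insert (∅ : Set X) b := hB ▸ mem_range_self i
    rcases this with h | h
    · simp [h]
    · exact hb.isOpen h
  -- build decreasing sequence of infinite sets
  have step : ∀ i : ℕ, ∀ A : {s : Set ℕ // s.Infinite},
      ∃ A' : {s : Set ℕ // s.Infinite}, A'.1 ⊆ A.1 ∧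
        ((∀ n ∈ A'.1, (B i ∩ K n).Nonempty) ∨ (∀ n ∈ A'.1, B i ∩ K n = ∅)) := by
    intro i ⟨A, hA⟩
    by_cases hS : {n ∈ A | (B i ∩ K n).Nonempty}.Infinite
    · exact ⟨⟨_, hS⟩, fun n hn => hn.1, Or.inl fun n hn => hn.2⟩
    · refine ⟨⟨A \ {n ∈ A | (B i ∩ K n).Nonempty}, hA.diff (not_infinite.mp hS)⟩,
        fun n hn => hn.1, Or.inr fun n hn => ?_⟩
      by_contra h
      exact hn.2 ⟨hn.1, nonempty_iff_ne_empty.mpr h⟩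
  choose step hsub hdich using step
  let Aseq : ℕ → {s : Set ℕ // s.Infinite} := fun i =>
    Nat.rec ⟨univ, infinite_univ⟩ (fun i A => step i A) i
  have hAseq_succ : ∀ i, Aseq (i + 1) = step i (Aseq i) := fun i => rfl
  have hmono : ∀ i j, i ≤ j → (Aseq j).1 ⊆ (Aseq i).1 := by
    intro i j hij
    induction j with
    | zero => simp_all
    | succ j ih =>
      rcases Nat.lt_or_ge i (j+1) with h | h
      · exact (hsub j (Aseq j)).trans (ih (Nat.lt_succ_iff.mp h))
      · have : i = j + 1 := le_antisymm hij h
        subst this; exact fun _ h => h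
  -- diagonal sequence
  have exgt : ∀ i (m : ℕ), ∃ k, k ∈ (Aseq i).1 ∧ m < k := fun i m =>
    (Aseq i).2.exists_gt m
  choose g hg1 hg2 using exgt
  let a : ℕ → ℕ := fun i => Nat.rec (g 0 0) (fun i x => g (i+1) x) i
  have ha_mem : ∀ i, a i ∈ (Aseq i).1 := by
    intro i; cases i with
    | zero => exact hg1 0 0
    | succ i => exact hg1 (i+1) (a i)
  have ha_lt : ∀ i, a i < a (i + 1) := fun i => hg2 (i+1) (a i)
  have ha_mono : StrictMono a := strictMono_nat_of_lt_succ ha_lt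
  set A : Set ℕ := range a with hA
  have hAinf : A.Infinite := infinite_range_of_injective ha_mono.injective
  have htail : ∀ i, {n ∈ A | n ∉ (Aseq i).1}.Finite := by
    intro i
    apply Finite.subset ((finite_Iio i).image a)
    rintro n ⟨⟨j, rfl⟩, hn⟩
    refine ⟨j, ?_, rfl⟩
    by_contra h
    exact hn (hmono i j (le_of_not_gt h) (ha_mem j))
  refine ⟨A, hAinf, ?_⟩
  apply Subset.antisymm
  · -- Li ⊆ Ls
    intro x hx U hU hxU
    have hfin := hx U hU hxU
    have : A \ {n ∈ A | U ∩ K n = ∅} ⊆ {n ∈ A | (U ∩ K n).Nonempty} := by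
      rintro n ⟨hn, hn2⟩
      exact ⟨hn, nonempty_iff_ne_empty.mpr fun h => hn2 ⟨hn, h⟩⟩
    exact Infinite.mono this (hAinf.diff hfin)
  · -- Ls ⊆ Li
    intro x hx U hU hxU
    obtain ⟨v, hv, hxv, hvU⟩ := hb.exists_subset_of_mem_open hxU hU
    obtain ⟨i, hi⟩ : ∃ i, B i = v := by
      have : v ∈ range B := hB ▸ mem_insert_of_mem _ hv
      exact this
    have hinf : {n ∈ A | (B i ∩ K n).Nonempty}.Infinite := by
      rw [hi]; exact hx v (hb.isOpen hv) hxv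
    -- pick n in A ∩ Aseq (i+1) with B i ∩ K n nonempty
    obtain ⟨n, hn⟩ := (hinf.diff (htail (i+1))).nonempty
    have hnmem : n ∈ (Aseq (i+1)).1 := by
      by_contra h; exact hn.2 ⟨hn.1.1, h⟩
    have hcase : ∀ m ∈ (Aseq (i+1)).1, (B i ∩ K m).Nonempty := by
      rcases hdich i (Aseq i) with h | h
      · exact fun m hm => h m hm
      · exact absurd (hn.1.2) (by rw [h n hnmem]; simp)
    apply Finite.subset (htail (i+1))
    rintro m ⟨hm, hm2⟩
    refine ⟨hm, fun h => ?_⟩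
    obtain ⟨y, hy1, hy2⟩ := hcase m h
    exact absurd hm2 (nonempty_iff_ne_empty.mp ⟨y, hvU (hi ▸ hy1), hy2⟩ )
end

section
/- (Sierpiński) Assume the continuum hypothesis, 2^{ℵ₀} = ℵ₁. Let X be a metrizable topological space such that every sequence (Kₙ)_{n∈ℕ} of subsets of X has a subsequence converging in the sense of Kuratowski. Then X is separable. -/
open Set Topology TopologicalSpace

lemma CH_lift.{v, u} (h : Cardinal.continuum.{v} = Cardinal.aleph.{v} 1) :
    Cardinal.continuum.{u} = Cardinal.aleph.{u} 1 := by
  have h2 := congrArg Cardinal.lift.{u} h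
  rw [Cardinal.lift_continuum, Cardinal.lift_aleph, Ordinal.lift_one] at h2
  have h3 : Cardinal.lift.{v} Cardinal.continuum.{u}
      = Cardinal.lift.{v} (Cardinal.aleph.{u} 1) := by
    rw [Cardinal.lift_continuum, Cardinal.lift_aleph, Ordinal.lift_one]
    exact h2
  exact Cardinal.lift_inj.1 h3

/-- Sierpiński: under CH, a metrizable space in which every sequence of sets
has a Kuratowski-convergent subsequence is separable. -/
theorem stmt1 (hCH : Cardinal.continuum = Cardinal.aleph 1)
    {X : Type*} [t : TopologicalSpace X] [MetrizableSpace X]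
    (hGBW : ∀ K : ℕ → Set X, ∃ A : Set ℕ, A.Infinite ∧ kurLi t K A = kurLs t K A) :
    SeparableSpace X := by
  obtain ⟨m, hm⟩ : ∃ m : MetricSpace X, m.toUniformSpace.toTopologicalSpace = t :=
    ⟨metrizableSpaceMetric X, rfl⟩
  subst hm
  letI := m
  -- maximal separated sets
  have hmax : ∀ n : ℕ, ∃ D : Set X,
      Maximal (· ∈ {s : Set X | s.Pairwise fun x y => 1 / (n + 1) ≤ dist x y}) D := by
    intro n
    apply zorn_subset
    intro c hc hchain
    refine ⟨⋃₀ c, ?_, fun s hs => subset_sUnion_of_mem hs⟩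
    intro x hx y hy hxy
    obtain ⟨s, hs, hxs⟩ := hx
    obtain ⟨s', hs', hys'⟩ := hy
    rcases hchain.total hs hs' with h | h
    · exact hc hs' (h hxs) hys' hxy
    · exact hc hs hxs (h hys') hxy
  choose D hD using hmax
  by_cases hcnt : ∀ n, (D n).Countable
  · -- all countable: the union is a countable dense set
    refine ⟨⟨⋃ n, D n, countable_iUnion hcnt, ?_⟩⟩
    rw [Metric.dense_iff]
    intro x r hr
    obtain ⟨n, hn⟩ := exists_nat_one_div_lt hr
    by_cases hxD : x ∈ D n
    · exact ⟨x, Metric.mem_ball_self hr, mem_iUnion.2 ⟨n, hxD⟩⟩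
    by_contra hne
    rw [Set.not_nonempty_iff_eq_empty] at hne
    have hfar : ∀ y ∈ D n, 1 / (n + 1 : ℝ) ≤ dist x y := by
      intro y hy
      by_contra hlt
      push_neg at hlt
      have : y ∈ Metric.ball x r ∩ ⋃ n, D n := by
        refine ⟨?_, mem_iUnion.2 ⟨n, hy⟩⟩
        rw [Metric.mem_ball, dist_comm]
        exact hlt.trans hn
      simp [hne] at this
    have hins : insert x (D n) ∈ {s : Set X | s.Pairwise fun x y => 1 / (n + 1) ≤ dist x y} := by
      refine letI : Std.Symm (fun x y : X => 1 / ((n : ℝ) + 1) ≤ dist x y) := ⟨?_⟩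
        (Set.pairwise_insert_of_symm).2 ⟨(hD n).1, fun y hy _ => hfar y hy⟩
      intro a b h
      rwa [dist_comm]
    exact hxD ((hD n).2 hins (Set.subset_insert _ _) (Set.mem_insert _ _))
  · -- some maximal separated set is uncountable
    push_neg at hcnt
    obtain ⟨n, hDn⟩ := hcnt
    set ε : ℝ := 1 / (n + 1) with hε
    have hεpos : 0 < ε := by positivity
    have hsep : (D n).Pairwise fun x y => ε ≤ dist x y := (hD n).1
    -- cardinality: inject `Set ℕ` into `D n`
    have h1 : Cardinal.aleph 1 ≤ Cardinal.mk (D n) := by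
      rw [← not_lt, ← Cardinal.countable_iff_lt_aleph_one]
      exact hDn
    obtain ⟨f⟩ : Nonempty (Set ℕ ↪ (D n)) := by
      rw [← Cardinal.lift_mk_le', Cardinal.mk_set, Cardinal.mk_nat,
        Cardinal.two_power_aleph0, Cardinal.lift_continuum, Cardinal.lift_uzero,
        CH_lift hCH]
      exact h1
    set K : ℕ → Set X := fun k => {x | ∃ s : Set ℕ, k ∈ s ∧ (f s : X) = x} with hK
    obtain ⟨A, hAinf, hLi⟩ := hGBW K
    exfalso
    -- split A
    obtain g := hAinf.natEmbedding
    set s : Set ℕ := {k | ∃ j, (g (2 * j) : ℕ) = k} with hs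
    have hginj : ∀ {i j : ℕ}, (g i : ℕ) = (g j : ℕ) → i = j := by
      intro i j h
      exact g.injective (Subtype.ext h)
    have hs1 : (A ∩ s).Infinite := by
      apply Set.infinite_of_injective_forall_mem (f := fun j : ℕ => (g (2 * j) : ℕ))
      · intro i j h
        have := hginj h
        omega
      · intro j
        exact ⟨(g (2 * j)).2, ⟨j, rfl⟩⟩
    have hs2 : (A \ s).Infinite := by
      apply Set.infinite_of_injective_forall_mem (f := fun j : ℕ => (g (2 * j + 1) : ℕ))
      · intro i j h
        have := hginj h
        omega
      · intro j
        refine ⟨(g (2 * j + 1)).2, ?_⟩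
        rintro ⟨i, hi⟩
        have := hginj hi
        omega
    set x : X := (f s : X) with hx
    have hxLs : x ∈ kurLs UniformSpace.toTopologicalSpace K A := by
      intro U hU hxU
      refine Set.Infinite.mono ?_ hs1
      rintro k ⟨hkA, hks⟩
      exact ⟨hkA, ⟨x, hxU, ⟨s, hks, rfl⟩⟩⟩
    have hxLi : x ∉ kurLi UniformSpace.toTopologicalSpace K A := by
      intro h
      have hfin := h (Metric.ball x (ε / 2)) Metric.isOpen_ball
        (Metric.mem_ball_self (by linarith))
      refine Set.Infinite.mono ?_ hs2 hfin
      rintro k ⟨hkA, hks⟩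
      refine ⟨hkA, ?_⟩
      rw [Set.eq_empty_iff_forall_notMem]
      rintro y ⟨hyb, ⟨s', hks', hys'⟩⟩
      have hyD : y ∈ D n := by rw [← hys']; exact (f s').2
      have hxD : x ∈ D n := (f s).2
      have hyx : y = x := by
        by_contra hne
        have := hsep hyD hxD hne
        rw [Metric.mem_ball] at hyb
        linarith
      have : s' = s := f.injective (Subtype.ext (by rw [hys', hyx]))
      exact hks (this ▸ hks')
    rw [hLi] at hxLi
    exact hxLi hxLs
end

section
/- (Booth) Let X be a topological space admitting a base 𝓑 for its topology such that no family of subsets of ℕ of cardinality at most |𝓑| is a splitting family (i.e., |𝓑| is strictly less than the splitting number 𝔰). Then every sequence (Kₙ)_{n∈ℕ} of subsets of X has a subsequence that converges in the sense of Kuratowski. -/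
open Set Topology TopologicalSpace

universe u

/-- Booth: if `X` has a base of cardinality less than the splitting number `𝔰`,
then every sequence of subsets of `X` has a Kuratowski-convergent subsequence. -/
theorem stmt2 {X : Type u} [t : TopologicalSpace X] (B : Set (Set X))
    (hB : IsTopologicalBasis B)
    (hsmall : ∀ S : Set (Set ℕ),
      Cardinal.lift.{u} (Cardinal.mk S) ≤ Cardinal.mk B → ¬ IsSplittingFamily S)
    (K : ℕ → Set X) :
    ∃ A : Set ℕ, A.Infinite ∧ kurLi t K A = kurLs t K A := by

  classical
  set f : Set X → Set ℕ := fun U => {n | (U ∩ K n).Nonempty} with hf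
  have hcard : Cardinal.lift.{u} (Cardinal.mk (f '' B)) ≤ Cardinal.mk B := by
    have h1 := Cardinal.mk_image_le_lift (f := f) (s := B)
    simpa using h1
  have hns := hsmall (f '' B) hcard
  rw [IsSplittingFamily] at hns
  push_neg at hns
  obtain ⟨A, hA, hsplit⟩ := hns
  refine ⟨A, hA, ?_⟩
  ext x
  constructor
  · intro hx U hU hxU
    have hfin := hx U hU hxU
    have : {n ∈ A | (U ∩ K n).Nonempty} = A \ {n ∈ A | U ∩ K n = ∅} := by
      ext n
      simp only [mem_setOf_eq, mem_diff, Set.nonempty_iff_ne_empty]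
      tauto
    rw [this]
    exact hA.diff hfin
  · intro hx U hU hxU
    obtain ⟨V, hVB, hxV, hVU⟩ := hB.exists_subset_of_mem_open hxU hU
    have hinf : {n ∈ A | (V ∩ K n).Nonempty}.Infinite := hx V (hB.isOpen hVB) hxV
    have hAs : (A ∩ f V).Infinite := by
      have : A ∩ f V = {n ∈ A | (V ∩ K n).Nonempty} := by
        ext n; simp [hf, Set.mem_inter_iff, and_comm]
      rw [this]; exact hinf
    have hfin : (A \ f V).Finite := by
      by_contra hc
      exact hc (hsplit (f V) (mem_image_of_mem f hVB) hAs)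
    refine Set.Finite.subset hfin ?_
    intro n hn
    simp only [mem_setOf_eq] at hn
    refine ⟨hn.1, ?_⟩
    simp only [hf, mem_setOf_eq]
    intro hne
    obtain ⟨y, hyV, hyK⟩ := hne
    exact absurd (Set.mem_inter (hVU hyV) hyK) (by rw [hn.2]; exact notMem_empty y)
end

section
/- Let X be a topological space, 𝓑 a base for its topology, and (Kₙ)_{n∈ℕ} a sequence of subsets of X having no subsequence that converges in the sense of Kuratowski. For each U ∈ 𝓑 let A_U = {n ∈ ℕ : Kₙ ∩ U = ∅}. Then the family {A_U : U ∈ 𝓑} is a splitting family of subsets of ℕ. -/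
open Set Topology TopologicalSpace

theorem stmt3' {X : Type*} [t : TopologicalSpace X] (B : Set (Set X))
    (hB : IsTopologicalBasis B) (K : ℕ → Set X)
    (hK : ∀ A : Set ℕ, A.Infinite → kurLi t K A ≠ kurLs t K A) :
    IsSplittingFamily ((fun U => {n : ℕ | K n ∩ U = ∅}) '' B) := by
  intro A hA
  -- Li ⊆ Ls
  have hsub : kurLi t K A ⊆ kurLs t K A := by
    intro x hx U hU hxU
    have hfin := hx U hU hxU
    have : A ⊆ {n ∈ A | U ∩ K n = ∅} ∪ {n ∈ A | (U ∩ K n).Nonempty} := by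
      intro n hn
      rcases (U ∩ K n).eq_empty_or_nonempty with h | h
      · exact Or.inl ⟨hn, h⟩
      · exact Or.inr ⟨hn, h⟩
    by_contra hinf
    rw [Set.not_infinite] at hinf
    exact hA ((hfin.union hinf).subset this)
  obtain ⟨x, hxLs, hxLi⟩ : ∃ x, x ∈ kurLs t K A ∧ x ∉ kurLi t K A := by
    by_contra h
    push_neg at h
    exact hK A hA (Set.Subset.antisymm hsub h)
  simp only [kurLi, Set.mem_setOf_eq, not_forall] at hxLi
  obtain ⟨U, hU, hxU, hinf⟩ := hxLi
  rw [← Set.not_infinite, not_not] at hinf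
  obtain ⟨V, hVB, hxV, hVU⟩ := hB.exists_subset_of_mem_open hxU hU
  refine ⟨{n : ℕ | K n ∩ V = ∅}, Set.mem_image_of_mem _ hVB, ?_, ?_⟩
  · refine hinf.mono ?_
    rintro n ⟨hnA, hn⟩
    refine ⟨hnA, ?_⟩
    simp only [Set.mem_setOf_eq]
    rw [Set.eq_empty_iff_forall_notMem] at hn ⊢
    exact fun y hy => hn y ⟨hVU hy.2, hy.1⟩
  · have := hxLs V (hB.isOpen hVB) hxV
    refine this.mono ?_
    rintro n ⟨hnA, y, hyV, hyK⟩
    exact ⟨hnA, fun h => (Set.eq_empty_iff_forall_notMem.mp h y ⟨hyK, hyV⟩)⟩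

/-- If `(Kₙ)` has no Kuratowski-convergent subsequence and `B` is a base, then
the family of the sets `A_U = {n | Kₙ ∩ U = ∅}`, `U ∈ B`, is splitting. -/
theorem stmt3 {X : Type*} [t : TopologicalSpace X] (B : Set (Set X))
    (hB : IsTopologicalBasis B) (K : ℕ → Set X)
    (hK : ∀ A : Set ℕ, A.Infinite → kurLi t K A ≠ kurLs t K A) :
    IsSplittingFamily ((fun U => {n : ℕ | K n ∩ U = ∅}) '' B) := by
  exact stmt3' B hB K hK
end

section
/- Let X be a metrizable topological space having a dense subset D such that no family of subsets of ℕ of cardinality at most |D| is a splitting family (i.e., the density of X is strictly less than the splitting number 𝔰). Then every sequence (Kₙ)_{n∈ℕ} of subsets of X has a subsequence that converges in the sense of Kuratowski. -/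
open Set Topology TopologicalSpace

universe u

/-- No finite family is splitting: diagonalization. -/
lemma finite_not_splitting (S : Set (Set ℕ)) (hS : S.Finite) :
    ∃ A : Set ℕ, A.Infinite ∧ ∀ s ∈ S, (A ∩ s).Finite ∨ (A \ s).Finite := by
  refine Set.Finite.induction_on
    (motive := fun S _ => ∃ A : Set ℕ, A.Infinite ∧ ∀ s ∈ S, (A ∩ s).Finite ∨ (A \ s).Finite)
    S hS ⟨Set.univ, Set.infinite_univ, by simp⟩ ?_
  rintro a S ha hSfin ⟨A, hAinf, hA⟩
  by_cases hcap : (A ∩ a).Infinite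
  · refine ⟨A ∩ a, hcap, ?_⟩
    rintro s hs
    rcases hs with rfl | hs
    · exact Or.inr (Set.Finite.subset (Set.finite_empty) (by
        rintro n ⟨⟨-, hn⟩, hn'⟩; exact hn' hn))
    · rcases hA s hs with h | h
      · exact Or.inl (h.subset (by
          rintro n ⟨⟨hn, -⟩, hn'⟩; exact ⟨hn, hn'⟩))
      · exact Or.inr (h.subset (by
          rintro n ⟨⟨hn, -⟩, hn'⟩; exact ⟨hn, hn'⟩))
  · have hdiff : (A \ a).Infinite := by
      rw [Set.not_infinite] at hcap
      have : A ⊆ (A ∩ a) ∪ (A \ a) := by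
        intro n hn
        by_cases h : n ∈ a
        · exact Or.inl ⟨hn, h⟩
        · exact Or.inr ⟨hn, h⟩
      intro hfin
      exact hAinf ((hcap.union hfin).subset this)
    refine ⟨A \ a, hdiff, ?_⟩
    rintro s hs
    rcases hs with rfl | hs
    · exact Or.inl (Set.Finite.subset (Set.finite_empty) (by
        rintro n ⟨⟨-, hn⟩, hn'⟩; exact hn hn'))
    · rcases hA s hs with h | h
      · exact Or.inl (h.subset (by
          rintro n ⟨⟨hn, -⟩, hn'⟩; exact ⟨hn, hn'⟩))
      · exact Or.inr (h.subset (by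
          rintro n ⟨⟨hn, -⟩, hn'⟩; exact ⟨hn, hn'⟩))

/-- A metrizable space of density less than the splitting number has the
generalized Bolzano–Weierstrass property. -/
theorem stmt4 {X : Type u} [t : TopologicalSpace X] [MetrizableSpace X]
    (D : Set X) (hD : Dense D)
    (hsmall : ∀ S : Set (Set ℕ),
      Cardinal.lift.{u} (Cardinal.mk S) ≤ Cardinal.mk D → ¬ IsSplittingFamily S)
    (K : ℕ → Set X) :
    ∃ A : Set ℕ, A.Infinite ∧ kurLi t K A = kurLs t K A := by
  letI m : MetricSpace X := TopologicalSpace.metrizableSpaceMetric X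
  set F : Set X → Set ℕ := fun U => {n | (U ∩ K n).Nonempty} with hF
  set f : ↥D × ℕ → Set ℕ := fun p => F (Metric.ball (p.1 : X) (1 / (p.2 + 1))) with hf
  set S : Set (Set ℕ) := Set.range f with hSdef
  -- obtain an infinite A unsplit by S
  obtain ⟨A, hAinf, hA⟩ :
      ∃ A : Set ℕ, A.Infinite ∧ ∀ s ∈ S, (A ∩ s).Finite ∨ (A \ s).Finite := by
    by_cases hDfin : D.Finite
    · -- then X is finite, so S is finite
      have hXfin : Finite X := by
        have h1 : closure D = Set.univ := hD.closure_eq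
        have h2 : IsClosed D := hDfin.isClosed
        rw [h2.closure_eq] at h1
        exact Set.finite_univ_iff.mp (h1 ▸ hDfin)
      have hSfin : S.Finite := by
        have : S ⊆ Set.range F := by
          rintro s ⟨p, rfl⟩; exact ⟨_, rfl⟩
        exact (Set.finite_range F).subset this
      exact finite_not_splitting S hSfin
    · -- cardinality argument
      have hDinf : D.Infinite := hDfin
      have hcard : Cardinal.lift.{u} (Cardinal.mk S) ≤ Cardinal.mk D := by
        have h1 : Cardinal.lift.{u} (Cardinal.mk S) ≤
            Cardinal.lift.{0} (Cardinal.mk (↥D × ℕ)) := Cardinal.mk_range_le_lift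
        rw [Cardinal.lift_uzero] at h1
        refine h1.trans ?_
        have h2 : Cardinal.mk (↥D × ℕ) = Cardinal.mk ↥D * Cardinal.aleph0 := by
          simp [Cardinal.mk_prod]
        rw [h2]
        have h3 : Cardinal.aleph0 ≤ Cardinal.mk ↥D := by
          rw [Cardinal.aleph0_le_mk_iff]
          exact hDinf.to_subtype
        exact le_of_eq (Cardinal.mul_eq_left h3 h3 Cardinal.aleph0_ne_zero)
      have hns := hsmall S hcard
      rw [IsSplittingFamily] at hns
      push_neg at hns
      obtain ⟨A, hAinf, hA⟩ := hns
      refine ⟨A, hAinf, fun s hs => ?_⟩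
      have := hA s hs
      by_cases h : (A ∩ s).Infinite
      · exact Or.inr (this h)
      · exact Or.inl (Set.not_infinite.mp h)
  refine ⟨A, hAinf, ?_⟩
  ext x
  constructor
  · -- Li ⊆ Ls
    intro hx U hU hxU
    have hfin := hx U hU hxU
    have hsub : A \ {n ∈ A | U ∩ K n = ∅} ⊆ {n ∈ A | (U ∩ K n).Nonempty} := by
      rintro n ⟨hn, hn'⟩
      refine ⟨hn, Set.nonempty_iff_ne_empty.mpr fun h => hn' ⟨hn, h⟩⟩
    exact fun h => hAinf ((h.subset hsub).union hfin |>.subset (by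
      intro n hn; by_cases h' : U ∩ K n = ∅
      · exact Or.inr ⟨hn, h'⟩
      · exact Or.inl ⟨hn, fun hc => h' hc.2⟩))
  · -- Ls ⊆ Li
    intro hx U hU hxU
    -- find a ball V = ball d r with x ∈ V ⊆ U, V in the family
    obtain ⟨ε, hε, hball⟩ := Metric.isOpen_iff.mp hU x hxU
    obtain ⟨k, hk⟩ := exists_nat_one_div_lt (half_pos hε)
    have hrpos : (0 : ℝ) < 1 / (k + 1) := by positivity
    obtain ⟨d, hdx, hdD⟩ := Metric.dense_iff.mp hD x (1 / (k + 1)) hrpos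
    set V : Set X := Metric.ball d (1 / ((k : ℝ) + 1)) with hV
    have hxV : x ∈ V := by
      rw [hV, Metric.mem_ball, dist_comm]
      exact Metric.mem_ball.mp hdx
    have hVU : V ⊆ U := by
      intro y hy
      apply hball
      rw [Metric.mem_ball]
      calc dist y x ≤ dist y d + dist d x := dist_triangle y d x
        _ < 1 / (k + 1) + 1 / (k + 1) := by
            exact add_lt_add (Metric.mem_ball.mp hy) (Metric.mem_ball.mp hdx)
        _ < ε / 2 + ε / 2 := by exact add_lt_add hk hk
        _ = ε := by ring
    have hVS : F V ∈ S := ⟨(⟨d, hdD⟩, k), by simp [hf, hV]⟩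
    have hVopen : IsOpen[t] V := Metric.isOpen_ball
    have hLs := hx V hVopen hxV
    have hAS : (A ∩ F V).Infinite := by
      refine hLs.mono ?_ |>.mono (fun n hn => hn)
      intro n hn
      exact ⟨hn.1, hn.2⟩
    have hdiff : (A \ F V).Finite := by
      rcases hA (F V) hVS with h | h
      · exact (hAS h).elim
      · exact h
    refine hdiff.subset ?_
    rintro n ⟨hn, hn'⟩
    refine ⟨hn, fun hns => ?_⟩
    have : (U ∩ K n) = ∅ := hn'
    exact Set.eq_empty_iff_forall_notMem.mp this _ ⟨hVU hns.choose_spec.1, hns.choose_spec.2⟩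
end

section
/- Let X be a topological space having a discrete subspace D such that there exists a splitting family 𝒮 of subsets of ℕ and an injection from 𝒮 into D (i.e., |D| ≥ 𝔰). Then there is a sequence (Kₙ)_{n∈ℕ} of subsets of X with no subsequence converging in the sense of Kuratowski. -/
open Set Topology TopologicalSpace

/-- If `X` has a discrete subspace `D` admitting an injection from a splitting
family into it, then some sequence of subsets of `X` has no
Kuratowski-convergent subsequence. -/
theorem stmt5 {X : Type*} [t : TopologicalSpace X] (D : Set X)
    (hD : ∀ d ∈ D, ∃ U : Set X, IsOpen U ∧ U ∩ D = {d})
    (S : Set (Set ℕ)) (hS : IsSplittingFamily S)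
    (φ : S → D) (hφ : Function.Injective φ) :
    ∃ K : ℕ → Set X, ∀ A : Set ℕ, A.Infinite → kurLi t K A ≠ kurLs t K A := by
  refine ⟨fun n => {x | ∃ s : S, n ∈ (s : Set ℕ) ∧ (φ s : X) = x}, ?_⟩
  intro A hA heq
  obtain ⟨s, hsS, hAs, hAds⟩ := hS A hA
  set σ : S := ⟨s, hsS⟩
  set d : X := (φ σ : X)
  obtain ⟨U, hU, hUD⟩ := hD d (φ σ).2
  have hdU : d ∈ U := by
    have : d ∈ ({d} : Set X) := rfl
    rw [← hUD] at this
    exact this.1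
  -- d is in kurLs
  have hLs : d ∈ kurLs t (fun n => {x | ∃ s : S, n ∈ (s : Set ℕ) ∧ (φ s : X) = x}) A := by
    intro V hV hdV
    apply Set.Infinite.mono (s := A ∩ s) _ hAs
    intro n hn
    exact ⟨hn.1, d, hdV, σ, hn.2, rfl⟩
  -- d is not in kurLi
  have hLi : d ∉ kurLi t (fun n => {x | ∃ s : S, n ∈ (s : Set ℕ) ∧ (φ s : X) = x}) A := by
    intro h
    have := h U hU hdU
    refine hAds (this.subset (fun n hn => ⟨hn.1, ?_⟩))
    ext x
    simp only [Set.mem_inter_iff, Set.mem_setOf_eq, Set.mem_empty_iff_false, iff_false]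
    rintro ⟨hxU, σ', hnσ', rfl⟩
    have hxD : (φ σ' : X) ∈ U ∩ D := ⟨hxU, (φ σ').2⟩
    rw [hUD] at hxD
    have : φ σ' = φ σ := Subtype.coe_injective hxD
    have : σ' = σ := hφ this
    subst this; exact hn.2 hnσ'
  rw [heq] at hLi
  exact hLi hLs
end

section
/- Let X be a topological space, D ⊆ X a discrete subspace, 𝒮 a splitting family of subsets of ℕ, and φ : 𝒮 → D an injective function. For each n ∈ ℕ define Kₙ = {φ(S) : S ∈ 𝒮 and n ∈ S}. Then for every infinite A ⊆ ℕ the subsequence (Kₙ)_{n∈A} does not converge in the sense of Kuratowski; more precisely, there is S ∈ 𝒮 splitting A such that φ(S) ∈ Ls (Kₙ)_{n∈A} \ Li (Kₙ)_{n∈A}. -/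
open Set Topology TopologicalSpace

/-- With `D ⊆ X` discrete, `S` a splitting family, `φ : S → D` injective and
`Kₙ = {φ s : s ∈ S, n ∈ s}`, no subsequence of `(Kₙ)` converges in the sense
of Kuratowski; more precisely, for each infinite `A ⊆ ℕ` there is an `s ∈ S`
splitting `A` with `φ s ∈ Ls \ Li` of the subsequence. -/
theorem stmt6 {X : Type*} [t : TopologicalSpace X] (D : Set X)
    (hD : ∀ d ∈ D, ∃ U : Set X, IsOpen U ∧ U ∩ D = {d})
    (S : Set (Set ℕ)) (hS : IsSplittingFamily S)
    (φ : S → X) (hφ : Function.Injective φ) (hφD : ∀ s, φ s ∈ D)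
    (K : ℕ → Set X)
    (hK : ∀ n, K n = {x | ∃ s : S, n ∈ (s : Set ℕ) ∧ x = φ s})
    (A : Set ℕ) (hA : A.Infinite) :
    kurLi t K A ≠ kurLs t K A ∧
      ∃ s : S, (A ∩ (s : Set ℕ)).Infinite ∧ (A \ (s : Set ℕ)).Infinite ∧
        φ s ∈ kurLs t K A \ kurLi t K A := by

  obtain ⟨s0, hs0S, hi, hd⟩ := hS A hA
  set s : S := ⟨s0, hs0S⟩
  have hmem : ∀ n, φ s ∈ K n ↔ n ∈ s0 := by
    intro n
    rw [hK n]
    constructor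
    · rintro ⟨s', hn, he⟩
      have : s' = s := hφ he.symm
      subst this; exact hn
    · intro hn; exact ⟨s, hn, rfl⟩
  have hKD : ∀ n, K n ⊆ D := by
    intro n x hx
    rw [hK n] at hx
    obtain ⟨s', _, rfl⟩ := hx
    exact hφD s'
  have hLs : φ s ∈ kurLs t K A := by
    intro U hU hxU
    apply Set.Infinite.mono (s := A ∩ s0) _ hi
    rintro n ⟨hnA, hns⟩
    exact ⟨hnA, φ s, hxU, (hmem n).2 hns⟩
  have hLi : φ s ∉ kurLi t K A := by
    intro h
    obtain ⟨U, hU, hUD⟩ := hD (φ s) (hφD s)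
    have hxU : φ s ∈ U := by
      have : φ s ∈ U ∩ D := by rw [hUD]; rfl
      exact this.1
    have hfin := h U hU hxU
    apply hd (hfin.subset ?_)
    rintro n ⟨hnA, hns⟩
    refine ⟨hnA, ?_⟩
    ext x
    simp only [Set.mem_inter_iff, Set.mem_empty_iff_false, iff_false]
    rintro ⟨hxU', hxK⟩
    have hxD : x ∈ U ∩ D := ⟨hxU', hKD n hxK⟩
    rw [hUD] at hxD
    rw [hxD] at hxK
    exact hns ((hmem n).1 hxK)
  refine ⟨?_, s, hi, hd, hLs, hLi⟩
  intro heq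
  exact hLi (heq ▸ hLs)
end

section
/- Let X be a metrizable topological space in which every sequence of subsets has a subsequence converging in the sense of Kuratowski. Then for every splitting family 𝒮 of subsets of ℕ, X has a dense subset of cardinality strictly less than |𝒮| (i.e., the density of X is strictly less than the splitting number 𝔰). -/
open Set Topology TopologicalSpace

universe u

/-- Key lemma: if every sequence of sets has a Kuratowski-convergent subsequence,
then no splitting family injects into a subset `Y` of `X` all of whose points
are isolated in `Y`. -/
theorem lemA_aux {X : Type u} [t : TopologicalSpace X]
    (hGBW : ∀ K : ℕ → Set X, ∃ A : Set ℕ, A.Infinite ∧ kurLi t K A = kurLs t K A)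
    (T : Set (Set ℕ)) (hT : IsSplittingFamily T) (Y : Set X)
    (hY : ∀ y ∈ Y, ∃ U : Set X, IsOpen U ∧ y ∈ U ∧ U ∩ Y ⊆ {y})
    (f : T → X) (hfinj : Function.Injective f) (hfY : ∀ s, f s ∈ Y) : False := by
  set K : ℕ → Set X := fun n => {x | ∃ s : T, n ∈ (s : Set ℕ) ∧ f s = x} with hK
  obtain ⟨A, hAinf, hLiLs⟩ := hGBW K
  obtain ⟨s, hsT, h1, h2⟩ := hT A hAinf
  set x := f ⟨s, hsT⟩ with hx
  have hxLs : x ∈ kurLs t K A := by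
    intro U hU hxU
    refine Set.Infinite.mono ?_ h1
    rintro n ⟨hnA, hns⟩
    exact ⟨hnA, ⟨x, hxU, ⟨⟨s, hsT⟩, hns, rfl⟩⟩⟩
  rw [← hLiLs] at hxLs
  obtain ⟨U, hUo, hxU, hiso⟩ := hY x (hfY _)
  have hfin := hxLs U hUo hxU
  have hsub : A \ s ⊆ {n ∈ A | U ∩ K n = ∅} := by
    rintro n ⟨hnA, hns⟩
    refine ⟨hnA, Set.eq_empty_iff_forall_notMem.mpr ?_⟩
    rintro z ⟨hzU, tt, hnt, rfl⟩
    have h5 : f tt = x := Set.mem_singleton_iff.mp (hiso ⟨hzU, hfY tt⟩)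
    have h6 : tt = ⟨s, hsT⟩ := hfinj h5
    have h7 : (tt : Set ℕ) = s := congrArg Subtype.val h6
    exact hns (h7 ▸ hnt)
  exact Set.not_infinite.mpr hfin (Set.Infinite.mono hsub h2)

/-- Relativized non-splitting: if every family of size at most `|T'|` fails to
split, then inside every infinite `B ⊆ ℕ` there is an infinite subset unsplit
by every member of `T'`. -/
theorem relA_aux (T' : Set (Set ℕ))
    (hns : ∀ T'' : Set (Set ℕ), Cardinal.mk T'' ≤ Cardinal.mk T' → ¬ IsSplittingFamily T'')
    (B : Set ℕ) (hB : B.Infinite) :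
    ∃ B' : Set ℕ, B' ⊆ B ∧ B'.Infinite ∧
      ∀ s ∈ T', (B' ∩ s).Finite ∨ (B' \ s).Finite := by
  classical
  haveI : Infinite B := hB.to_subtype
  letI : DecidablePred (· ∈ B) := fun _ => Classical.dec _
  letI : Denumerable B := Nat.Subtype.denumerable B
  let e : B ≃ ℕ := Denumerable.eqv B
  let φ : ℕ → ℕ := fun n => ((e.symm n : B) : ℕ)
  have hφinj : Function.Injective φ :=
    fun a b hab => e.symm.injective (Subtype.val_injective hab)
  have hTstar : ¬ IsSplittingFamily ((fun s => φ ⁻¹' s) '' T') :=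
    hns _ Cardinal.mk_image_le
  obtain ⟨C, hCinf, hC⟩ : ∃ C : Set ℕ, C.Infinite ∧
      ∀ s ∈ ((fun s => φ ⁻¹' s) '' T'), ¬((C ∩ s).Infinite ∧ (C \ s).Infinite) := by
    by_contra hcon
    push_neg at hcon
    apply hTstar
    intro A hA
    exact hcon A hA
  refine ⟨φ '' C, ?_, hCinf.image (Function.Injective.injOn hφinj), ?_⟩
  · rintro _ ⟨c, _, rfl⟩; exact (e.symm c).2
  · intro s hs
    have h := hC (φ ⁻¹' s) ⟨s, hs, rfl⟩
    rcases Set.finite_or_infinite (C ∩ φ ⁻¹' s) with h1 | h1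
    · left
      have heq : φ '' C ∩ s = φ '' (C ∩ φ ⁻¹' s) := (Set.image_inter_preimage φ C s).symm
      rw [heq]; exact h1.image φ
    rcases Set.finite_or_infinite (C \ φ ⁻¹' s) with h2 | h2
    · right
      have heq : φ '' C \ s = φ '' (C \ φ ⁻¹' s) := Set.image_diff_preimage.symm
      rw [heq]; exact h2.image φ
    · exact absurd ⟨h1, h2⟩ h

/-- Blass's argument: a countable union of "hereditarily non-splitting"
families is not splitting. -/
theorem blass_aux (Tn : ℕ → Set (Set ℕ))
    (hsmall : ∀ n, ∀ T'' : Set (Set ℕ),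
      Cardinal.mk T'' ≤ Cardinal.mk (Tn n) → ¬ IsSplittingFamily T'') :
    ¬ IsSplittingFamily (⋃ n, Tn n) := by
  intro hsplit
  have step : ∀ (n : ℕ) (B : Set ℕ), B.Infinite → ∃ B' : Set ℕ, B' ⊆ B ∧ B'.Infinite ∧
      ∀ s ∈ Tn n, (B' ∩ s).Finite ∨ (B' \ s).Finite :=
    fun n B hB => relA_aux (Tn n) (hsmall n) B hB
  choose! g hg1 hg2 hg3 using step
  let F : ℕ → {B : Set ℕ // B.Infinite} :=
    fun n => Nat.rec ⟨g 0 Set.univ, hg2 0 Set.univ Set.infinite_univ⟩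
      (fun m p => ⟨g (m + 1) p.1, hg2 (m + 1) p.1 p.2⟩) n
  let f : ℕ → Set ℕ := fun n => (F n).1
  have hFinf : ∀ n, (f n).Infinite := fun n => (F n).2
  have hFstep : ∀ n, f (n + 1) ⊆ f n := fun n => hg1 (n + 1) (f n) (hFinf n)
  have hFmono : ∀ {n m : ℕ}, n ≤ m → f m ⊆ f n := by
    intro n m h
    induction h with
    | refl => exact Set.Subset.rfl
    | step h ih => exact fun x hx => ih (hFstep _ hx)
  have hFuns : ∀ n, ∀ s ∈ Tn n, ((f n) ∩ s).Finite ∨ ((f n) \ s).Finite := by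
    intro n
    cases n with
    | zero => exact hg3 0 Set.univ Set.infinite_univ
    | succ m => exact hg3 (m + 1) (f m) (hFinf m)
  have pick : ∀ (n k : ℕ), ∃ m ∈ f n, k < m := fun n k => (hFinf n).exists_gt k
  choose p hp1 hp2 using pick
  let a : ℕ → ℕ := fun n => Nat.rec (p 0 0) (fun m prev => p (m + 1) prev) n
  have ha_mem : ∀ n, a n ∈ f n := by
    intro n
    cases n with
    | zero => exact hp1 0 0
    | succ m => exact hp1 (m + 1) (a m)
  have ha_mono : StrictMono a :=
    strictMono_nat_of_lt_succ fun n => hp2 (n + 1) (a n)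
  set A : Set ℕ := Set.range a with hA
  have hAinf : A.Infinite := Set.infinite_range_of_injective ha_mono.injective
  have hAfn : ∀ n, (A \ f n).Finite := by
    intro n
    apply Set.Finite.subset ((Set.finite_Iio n).image a)
    rintro x ⟨⟨m, rfl⟩, hx⟩
    refine ⟨m, ?_, rfl⟩
    by_contra hm
    exact hx (hFmono (le_of_not_gt hm) (ha_mem m))
  obtain ⟨s, hsmem, hi1, hi2⟩ := hsplit A hAinf
  obtain ⟨n, hsn⟩ := Set.mem_iUnion.mp hsmem
  rcases hFuns n s hsn with h | h
  · apply Set.not_infinite.mpr _ hi1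
    apply Set.Finite.subset ((hAfn n).union h)
    intro x ⟨hxA, hxs⟩
    by_cases hxf : x ∈ f n
    · exact Or.inr ⟨hxf, hxs⟩
    · exact Or.inl ⟨hxA, hxf⟩
  · apply Set.not_infinite.mpr _ hi2
    apply Set.Finite.subset ((hAfn n).union h)
    intro x ⟨hxA, hxs⟩
    by_cases hxf : x ∈ f n
    · exact Or.inr ⟨hxf, hxs⟩
    · exact Or.inl ⟨hxA, hxf⟩

/-- Maximal `ε`-separated sets exist and are `ε`-nets. -/
theorem exists_net_aux {X : Type u} [MetricSpace X] (ε : ℝ) (hε : 0 < ε) :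
    ∃ M : Set X, (∀ y ∈ M, Metric.ball y ε ∩ M ⊆ {y}) ∧
      ∀ x : X, ∃ y ∈ M, dist x y < ε := by
  classical
  set 𝒮 : Set (Set X) := {D | ∀ x ∈ D, ∀ y ∈ D, x ≠ y → ε ≤ dist x y} with h𝒮
  obtain ⟨M, hM⟩ : ∃ M, Maximal (· ∈ 𝒮) M := by
    apply zorn_subset
    intro c hc hchain
    refine ⟨⋃₀ c, ?_, fun s hs => Set.subset_sUnion_of_mem hs⟩
    rintro x ⟨sx, hsx, hxsx⟩ y ⟨sy, hsy, hysy⟩ hxy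
    rcases hchain.total hsx hsy with h | h
    · exact hc hsy x (h hxsx) y hysy hxy
    · exact hc hsx x hxsx y (h hysy) hxy
  refine ⟨M, ?_, ?_⟩
  · rintro y hy z ⟨hzball, hzM⟩
    by_contra hzy
    have := hM.1 z hzM y hy hzy
    exact absurd (Metric.mem_ball.mp hzball) (not_lt.mpr this)
  · intro x
    by_contra hx
    push_neg at hx
    have hins : insert x M ∈ 𝒮 := by
      rintro a ha b hb hab
      rcases ha with rfl | ha
      · rcases hb with rfl | hb
        · exact absurd rfl hab
        · exact hx b hb
      · rcases hb with rfl | hb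
        · rw [dist_comm]; exact hx a ha
        · exact hM.1 a ha b hb hab
    have hsub : insert x M ⊆ M := hM.2 hins (Set.subset_insert x M)
    have hxM : x ∈ M := hsub (Set.mem_insert x M)
    exact absurd (hx x hxM) (by simpa using hε)

/-- A metrizable space with the generalized Bolzano–Weierstrass property has
density less than the splitting number: it has a dense subset of cardinality
strictly less than that of any splitting family. -/
theorem stmt7 {X : Type u} [t : TopologicalSpace X] [MetrizableSpace X]
    (hGBW : ∀ K : ℕ → Set X, ∃ A : Set ℕ, A.Infinite ∧ kurLi t K A = kurLs t K A)
    (S : Set (Set ℕ)) (hS : IsSplittingFamily S) :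
    ∃ D : Set X, Dense D ∧ Cardinal.mk D < Cardinal.lift.{u} (Cardinal.mk S) := by
  classical
  letI m : MetricSpace X := TopologicalSpace.metrizableSpaceMetric X
  have hnet : ∀ n : ℕ, ∃ M : Set X,
      (∀ y ∈ M, Metric.ball y (1 / (n + 1)) ∩ M ⊆ {y}) ∧
      ∀ x : X, ∃ y ∈ M, dist x y < 1 / (n + 1) :=
    fun n => exists_net_aux _ (by positivity)
  choose D hD1 hD2 using hnet
  have hDense : Dense (⋃ n, D n) := by
    rw [Metric.dense_iff]
    intro x r hr
    obtain ⟨n, hn⟩ := exists_nat_one_div_lt hr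
    obtain ⟨y, hy, hxy⟩ := hD2 n x
    refine ⟨y, Metric.mem_ball.mpr ?_, Set.mem_iUnion.mpr ⟨n, hy⟩⟩
    rw [dist_comm]
    exact hxy.trans hn
  set 𝒜 : Set Cardinal.{0} := {c | ∃ T : Set (Set ℕ), IsSplittingFamily T ∧ Cardinal.mk T = c}
    with h𝒜
  have hne : 𝒜.Nonempty := ⟨_, S, hS, rfl⟩
  obtain ⟨T, hTsp, hTcard⟩ := csInf_mem hne
  have hTmin : ∀ T'' : Set (Set ℕ), Cardinal.mk T'' < Cardinal.mk T →
      ¬ IsSplittingFamily T'' := by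
    intro T'' hlt hsp
    have hle : sInf 𝒜 ≤ Cardinal.mk T'' := csInf_le (OrderBot.bddBelow _) ⟨T'', hsp, rfl⟩
    rw [← hTcard] at hle
    exact absurd hle (not_le.mpr hlt)
  have hDn : ∀ n, Cardinal.mk (D n) < Cardinal.lift.{u} (Cardinal.mk T) := by
    intro n
    by_contra hle
    rw [not_lt, ← Cardinal.lift_uzero (Cardinal.mk (D n))] at hle
    obtain ⟨f⟩ := Cardinal.lift_mk_le'.mp hle
    refine lemA_aux hGBW T hTsp (D n) ?_ (fun s => (f s : X))
      (fun a b hab => f.injective (Subtype.val_injective hab)) (fun s => (f s).2)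
    intro y hy
    exact ⟨Metric.ball y (1 / (n + 1)), Metric.isOpen_ball,
      Metric.mem_ball_self (by positivity), hD1 n y hy⟩
  refine ⟨⋃ n, D n, hDense, ?_⟩
  have hmain : Cardinal.mk ↥(⋃ n, D n) < Cardinal.lift.{u} (Cardinal.mk T) := by
    by_contra hle
    rw [not_lt, ← Cardinal.lift_uzero (Cardinal.mk ↥(⋃ n, D n))] at hle
    obtain ⟨f⟩ := Cardinal.lift_mk_le'.mp hle
    have hidx : ∀ s : T, ∃ n, (f s : X) ∈ D n := fun s => Set.mem_iUnion.mp (f s).2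
    choose idx hidx using hidx
    set Tn : ℕ → Set (Set ℕ) := fun n => {s | ∃ h : s ∈ T, idx ⟨s, h⟩ = n} with hTn
    have hTn_small : ∀ n, ∀ T'' : Set (Set ℕ),
        Cardinal.mk T'' ≤ Cardinal.mk (Tn n) → ¬ IsSplittingFamily T'' := by
      intro n T'' hle'' hsp
      refine hTmin T'' (lt_of_le_of_lt hle'' ?_) hsp
      have hinj : Cardinal.lift.{u} (Cardinal.mk (Tn n)) ≤ Cardinal.mk (D n) := by
        rw [← Cardinal.lift_uzero (Cardinal.mk ↥(D n))]
        refine Cardinal.lift_mk_le'.mpr ⟨⟨fun s => ⟨(f ⟨s.1, s.2.choose⟩ : X), ?_⟩, ?_⟩⟩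
        · have := hidx ⟨s.1, s.2.choose⟩
          rwa [s.2.choose_spec] at this
        · intro s1 s2 h12
          have hval := Subtype.ext_iff.mp h12
          have h3 := f.injective (Subtype.val_injective hval)
          exact Subtype.ext (show ((⟨s1.1, s1.2.choose⟩ : T) : Set ℕ) =
            ((⟨s2.1, s2.2.choose⟩ : T) : Set ℕ) from congrArg Subtype.val h3)
      have := lt_of_le_of_lt hinj (hDn n)
      exact (Cardinal.lift_lt).mp this
    refine blass_aux Tn hTn_small ?_
    intro A hA
    obtain ⟨s, hs, h1, h2⟩ := hTsp A hA
    exact ⟨s, Set.mem_iUnion.mpr ⟨idx ⟨s, hs⟩, hs, rfl⟩, h1, h2⟩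
  refine lt_of_lt_of_le hmain (Cardinal.lift_le.mpr ?_)
  rw [hTcard]
  exact csInf_le (OrderBot.bddBelow _) ⟨S, hS, rfl⟩
end

section
/- The Sorgenfrey line has the generalized Bolzano–Weierstrass property: if ℝ is equipped with the lower-limit topology (the topology generated by the half-open intervals [a,b) with a < b), then every sequence (Kₙ)_{n∈ℕ} of subsets of ℝ has a subsequence that converges in the sense of Kuratowski with respect to this topology. -/
open Set Topology TopologicalSpace

/-- The Sorgenfrey (lower-limit) topology on `ℝ`, generated by the half-open
intervals `[a, b)` with `a < b`. -/
def sorgenfreyTop : TopologicalSpace ℝ :=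
  TopologicalSpace.generateFrom {s : Set ℝ | ∃ a b : ℝ, a < b ∧ s = Set.Ico a b}


/-- A strictly monotone compression of `ℝ` into `(0,1)`. -/
noncomputable def sqz (y : ℝ) : ℝ := 1/2 + Real.arctan y / Real.pi

lemma sqz_strictMono : StrictMono sqz := fun a b hab => by
  unfold sqz
  have := Real.pi_pos
  have h := Real.arctan_strictMono hab
  gcongr

lemma sqz_pos (y : ℝ) : 0 < sqz y := by
  unfold sqz
  have hpi := Real.pi_pos
  have h : -(1/2 : ℝ) < Real.arctan y / Real.pi := by
    rw [lt_div_iff₀ hpi]; nlinarith [Real.neg_pi_div_two_lt_arctan y]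
  linarith

lemma sqz_lt_one (y : ℝ) : sqz y < 1 := by
  unfold sqz
  have hpi := Real.pi_pos
  have h : Real.arctan y / Real.pi < 1/2 := by
    rw [div_lt_iff₀ hpi]; nlinarith [Real.arctan_lt_pi_div_two y]
  linarith

/-- The encoding function: `hh K n x` is the compressed infimum of `K n ∩ [x, ∞)`,
with `1` thrown in to handle emptiness. -/
noncomputable def hh (K : ℕ → Set ℝ) (n : ℕ) (x : ℝ) : ℝ :=
  sInf (insert 1 (sqz '' (K n ∩ Set.Ici x)))

lemma hh_bddBelow (K : ℕ → Set ℝ) (n : ℕ) (x : ℝ) :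
    BddBelow (insert 1 (sqz '' (K n ∩ Set.Ici x))) := by
  refine ⟨0, ?_⟩
  rintro z (rfl | ⟨y, -, rfl⟩)
  · norm_num
  · exact (sqz_pos y).le

lemma hh_mem (K : ℕ → Set ℝ) (n : ℕ) (x : ℝ) : hh K n x ∈ Icc (0:ℝ) 1 := by
  constructor
  · apply le_csInf ⟨1, mem_insert _ _⟩
    rintro z (rfl | ⟨y, -, rfl⟩)
    · norm_num
    · exact (sqz_pos y).le
  · exact csInf_le (hh_bddBelow K n x) (mem_insert _ _)

lemma hh_mono (K : ℕ → Set ℝ) (n : ℕ) : Monotone (hh K n) := by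
  intro x y hxy
  apply csInf_le_csInf (hh_bddBelow K n x) ⟨1, mem_insert _ _⟩
  apply insert_subset_insert
  exact image_mono (inter_subset_inter_right _ (Ici_subset_Ici.2 hxy))

/-- Key translation: `K n` meets `[x, c)` iff `hh K n x < sqz c`. -/
lemma hh_lt_iff (K : ℕ → Set ℝ) (n : ℕ) {x c : ℝ} (hxc : x < c) :
    (Set.Ico x c ∩ K n).Nonempty ↔ hh K n x < sqz c := by
  constructor
  · rintro ⟨y, ⟨⟨hxy, hyc⟩, hyK⟩⟩
    calc hh K n x ≤ sqz y := csInf_le (hh_bddBelow K n x)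
          (mem_insert_of_mem _ ⟨y, ⟨hyK, hxy⟩, rfl⟩)
      _ < sqz c := sqz_strictMono hyc
  · intro h
    obtain ⟨z, hz, hzc⟩ := exists_lt_of_csInf_lt ⟨1, mem_insert _ _⟩ h
    rcases hz with rfl | ⟨y, ⟨hyK, hxy⟩, rfl⟩
    · exact absurd hzc (not_lt.2 (sqz_lt_one c).le)
    · exact ⟨y, ⟨⟨hxy, sqz_strictMono.lt_iff_lt.1 hzc⟩, hyK⟩⟩

/-- Convergence of `u` to `L` along the index set `A`, with finite exception sets. -/
def ConvTo (A : Set ℕ) (u : ℕ → ℝ) (L : ℝ) : Prop :=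
  ∀ ε > (0:ℝ), {n ∈ A | ε ≤ |u n - L|}.Finite

lemma ConvTo.mono_diff {A B : Set ℕ} {u : ℕ → ℝ} {L : ℝ}
    (hBA : (B \ A).Finite) (h : ConvTo A u L) : ConvTo B u L := by
  intro ε hε
  apply (hBA.union (h ε hε)).subset
  intro n hn
  by_cases hnA : n ∈ A
  · exact Or.inr ⟨hnA, hn.2⟩
  · exact Or.inl ⟨hn.1, hnA⟩

lemma ConvTo.mono {A B : Set ℕ} {u : ℕ → ℝ} {L : ℝ}
    (hBA : B ⊆ A) (h : ConvTo A u L) : ConvTo B u L :=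
  h.mono_diff (by simp [diff_eq_empty.2 hBA])

lemma ConvTo.exists_two {A : Set ℕ} (hA : A.Infinite) {u v : ℕ → ℝ} {L M : ℝ}
    (hu : ConvTo A u L) (hv : ConvTo A v M) {ε : ℝ} (hε : 0 < ε) :
    ∃ n ∈ A, |u n - L| < ε ∧ |v n - M| < ε := by
  have : (A \ ({n ∈ A | ε ≤ |u n - L|} ∪ {n ∈ A | ε ≤ |v n - M|})).Infinite :=
    hA.diff ((hu ε hε).union (hv ε hε))
  obtain ⟨n, hn⟩ := this.nonempty
  simp only [mem_diff, mem_union, mem_setOf_eq, not_or, not_and, not_le] at hn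
  exact ⟨n, hn.1, hn.2.1 hn.1, hn.2.2 hn.1⟩

/-- Bolzano–Weierstrass along an infinite index set. -/
lemma bw_along {A : Set ℕ} (hA : A.Infinite) (u : ℕ → ℝ) (hu : ∀ n, u n ∈ Icc (0:ℝ) 1) :
    ∃ B ⊆ A, B.Infinite ∧ ∃ L, ConvTo B u L := by
  let f : ℕ ↪ ↥A := hA.natEmbedding A
  set v : ℕ → ℝ := fun k => u (f k) with hv
  obtain ⟨L, -, φ, hφ, hlim⟩ := isCompact_Icc.tendsto_subseq (fun k => hu (f k))
  set g : ℕ → ℕ := fun k => (f (φ k) : ℕ) with hg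
  have hginj : Function.Injective g := fun a b hab => by
    have := f.injective (Subtype.ext hab)
    exact hφ.injective this
  refine ⟨Set.range g, ?_, Set.infinite_range_of_injective hginj, L, ?_⟩
  · rintro n ⟨k, rfl⟩; exact (f (φ k)).2
  · intro ε hε
    rw [Metric.tendsto_atTop] at hlim
    obtain ⟨N, hN⟩ := hlim ε hε
    apply ((Set.finite_Iio N).image g).subset
    rintro n ⟨⟨k, rfl⟩, hbad⟩
    refine ⟨k, ?_, rfl⟩
    by_contra hk
    have := hN k (not_lt.1 hk)
    rw [Real.dist_eq] at this
    exact absurd hbad (not_le.2 this)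

/-- Diagonalization: given a countable family of sequences, each admitting
convergent refinements, find a single infinite index set along which all converge. -/
lemma diagonal (u : ℕ → ℕ → ℝ) (A0 : Set ℕ) (hA0 : A0.Infinite)
    (H : ∀ k (s : Set ℕ), s.Infinite → ∃ B ⊆ s, B.Infinite ∧ ∃ L, ConvTo B (u k) L) :
    ∃ A ⊆ A0, A.Infinite ∧ ∀ k, ∃ L, ConvTo A (u k) L := by
  have H' : ∀ k (s : Set ℕ), ∃ B : Set ℕ,
      s.Infinite → B ⊆ s ∧ B.Infinite ∧ ∃ L, ConvTo B (u k) L := by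
    intro k s
    by_cases hs : s.Infinite
    · obtain ⟨B, h1, h2, h3⟩ := H k s hs
      exact ⟨B, fun _ => ⟨h1, h2, h3⟩⟩
    · exact ⟨∅, fun h => absurd h hs⟩
  choose F hF using H'
  set Ak : ℕ → Set ℕ := fun k => Nat.rec A0 (fun k s => F k s) k with hAk
  have hstep : ∀ k, Ak (k + 1) = F k (Ak k) := fun k => rfl
  have hinf : ∀ k, (Ak k).Infinite := by
    intro k
    induction k with
    | zero => exact hA0
    | succ k ih => rw [hstep]; exact (hF k (Ak k) ih).2.1
  have hsub : ∀ k, Ak (k + 1) ⊆ Ak k := fun k => (hF k (Ak k) (hinf k)).1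
  have hconv : ∀ k, ∃ L, ConvTo (Ak (k + 1)) (u k) L := fun k =>
    (hF k (Ak k) (hinf k)).2.2
  have hchain : ∀ j k, k ≤ j → Ak j ⊆ Ak k := by
    intro j
    induction j with
    | zero => intro k hk; rw [Nat.le_zero.1 hk]
    | succ j ih =>
      intro k hk
      rcases Nat.eq_or_lt_of_le hk with rfl | hk'
      · exact fun _ h => h
      · exact (ih k (Nat.lt_succ_iff.1 hk')).trans' (hsub j)
  -- diagonal picks
  have hpick : ∀ k (m : ℕ), ∃ p ∈ Ak k, m < p := fun k m => (hinf k).exists_gt m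
  choose P hP1 hP2 using hpick
  set e : ℕ → ℕ := fun k => Nat.rec (P 0 0) (fun k n => P (k + 1) n) k with he
  have he0 : e 0 = P 0 0 := rfl
  have hes : ∀ k, e (k + 1) = P (k + 1) (e k) := fun k => rfl
  have hemem : ∀ k, e k ∈ Ak k := by
    intro k
    cases k with
    | zero => exact hP1 0 0
    | succ k => rw [hes]; exact hP1 (k + 1) (e k)
  have hemono : StrictMono e := strictMono_nat_of_lt_succ fun k => by
    rw [hes]; exact hP2 _ _
  refine ⟨Set.range e, ?_, Set.infinite_range_of_injective hemono.injective, ?_⟩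
  · rintro n ⟨k, rfl⟩
    exact hchain k 0 (Nat.zero_le k) (hemem k)
  · intro k
    obtain ⟨L, hL⟩ := hconv k
    refine ⟨L, hL.mono_diff ?_⟩
    apply ((Set.finite_Iio (k + 1)).image e).subset
    rintro n ⟨⟨j, rfl⟩, hj⟩
    refine ⟨j, ?_, rfl⟩
    by_contra hjk
    exact hj (hchain j (k + 1) (not_lt.1 hjk) (hemem j))

/-- Helly-type selection: an infinite index set along which `hh K n x` converges
for every `x`. -/
lemma helly (K : ℕ → Set ℝ) :
    ∃ A : Set ℕ, A.Infinite ∧ ∀ x : ℝ, ∃ l, ConvTo A (fun n => hh K n x) l := by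
  -- first diagonalization: over the rationals
  obtain ⟨A1, -, hA1inf, hA1conv⟩ :=
    diagonal (fun k n => hh K n (((Denumerable.eqv ℚ).symm k : ℚ) : ℝ)) Set.univ
      Set.infinite_univ (fun k s hs => bw_along hs _ (fun n => hh_mem K n _))
  have hQ : ∀ q : ℚ, ∃ l, ConvTo A1 (fun n => hh K n (q : ℝ)) l := by
    intro q
    obtain ⟨l, hl⟩ := hA1conv ((Denumerable.eqv ℚ) q)
    rw [Equiv.symm_apply_apply] at hl
    exact ⟨l, hl⟩
  choose L hL using hQ
  -- elementary facts about the limits L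
  have hLmono : ∀ p q : ℚ, p ≤ q → L p ≤ L q := by
    intro p q hpq
    refine le_of_forall_pos_le_add fun ε hε => ?_
    obtain ⟨n, -, h1, h2⟩ := ConvTo.exists_two hA1inf (hL p) (hL q) (half_pos hε)
    have hm := hh_mono K n (show (p : ℝ) ≤ q by exact_mod_cast hpq)
    rw [abs_sub_lt_iff] at h1 h2
    linarith [h1.1, h1.2, h2.1, h2.2]
  have hL01 : ∀ q : ℚ, L q ∈ Icc (0:ℝ) 1 := by
    intro q
    have key : ∀ ε > (0:ℝ), ∃ n, |hh K n (q : ℝ) - L q| < ε := by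
      intro ε hε
      obtain ⟨n, -, h1, -⟩ := ConvTo.exists_two hA1inf (hL q) (hL q) hε
      exact ⟨n, h1⟩
    constructor
    · refine le_of_forall_pos_le_add fun ε hε => ?_
      obtain ⟨n, hn⟩ := key ε hε
      rw [abs_sub_lt_iff] at hn
      have := (hh_mem K n (q : ℝ)).1
      linarith [hn.1, hn.2]
    · refine le_of_forall_pos_le_add fun ε hε => ?_
      obtain ⟨n, hn⟩ := key ε hε
      rw [abs_sub_lt_iff] at hn
      have := (hh_mem K n (q : ℝ)).2
      linarith [hn.1, hn.2]
  -- the two one-sided limit functions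
  set S : ℝ → Set ℝ := fun x => L '' {p : ℚ | (p : ℝ) < x} with hSdef
  set I : ℝ → Set ℝ := fun x => L '' {q : ℚ | x < (q : ℝ)} with hIdef
  have hSne : ∀ x, (S x).Nonempty := by
    intro x; obtain ⟨p, hp⟩ := exists_rat_lt x; exact ⟨L p, p, hp, rfl⟩
  have hIne : ∀ x, (I x).Nonempty := by
    intro x; obtain ⟨q, hq⟩ := exists_rat_gt x; exact ⟨L q, q, hq, rfl⟩
  have hSbdd : ∀ x, BddAbove (S x) := by
    rintro x; exact ⟨1, by rintro a ⟨p, -, rfl⟩; exact (hL01 p).2⟩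
  have hIbdd : ∀ x, BddBelow (I x) := by
    rintro x; exact ⟨0, by rintro a ⟨q, -, rfl⟩; exact (hL01 q).1⟩
  have hSI : ∀ x, sSup (S x) ≤ sInf (I x) := by
    intro x
    apply csSup_le (hSne x)
    rintro a ⟨p, hp, rfl⟩
    apply le_csInf (hIne x)
    rintro b ⟨q, hq, rfl⟩
    simp only [Set.mem_setOf_eq] at hp hq
    exact hLmono p q (by exact_mod_cast le_of_lt (hp.trans hq))
  -- the countable set of jump points
  set D : Set ℝ := {x | sSup (S x) < sInf (I x)} with hDdef
  have hr : ∀ x : D, ∃ r : ℚ, sSup (S (x : ℝ)) < (r : ℝ) ∧ (r : ℝ) < sInf (I (x : ℝ)) :=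
    fun x => exists_rat_btwn x.2
  choose r hr1 hr2 using hr
  have hrlt : ∀ x y : D, (x : ℝ) < (y : ℝ) → (r x : ℝ) < (r y : ℝ) := by
    intro x y hxy
    obtain ⟨m, hm1, hm2⟩ := exists_rat_btwn hxy
    have h1 : sInf (I (x : ℝ)) ≤ L m := csInf_le (hIbdd _) ⟨m, hm1, rfl⟩
    have h2 : L m ≤ sSup (S (y : ℝ)) := le_csSup (hSbdd _) ⟨m, hm2, rfl⟩
    calc (r x : ℝ) < sInf (I (x : ℝ)) := hr2 x
      _ ≤ L m := h1
      _ ≤ sSup (S (y : ℝ)) := h2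
      _ < (r y : ℝ) := hr1 y
  have hrinj : Function.Injective r := by
    intro x y hxy
    by_contra hne
    have hne' : (x : ℝ) ≠ (y : ℝ) := fun h => hne (Subtype.ext h)
    rcases hne'.lt_or_gt with h | h
    · exact absurd (hrlt x y h) (by rw [hxy]; exact lt_irrefl _)
    · exact absurd (hrlt y x h) (by rw [hxy]; exact lt_irrefl _)
  have hDcount : D.Countable := by
    rw [← Set.countable_coe_iff]
    exact Countable.of_equiv _ (Equiv.ofInjective r hrinj).symm
  -- enumerate the jump points and diagonalize once more
  obtain ⟨xe, hxe⟩ := (hDcount.insert 0).exists_eq_range (Set.insert_nonempty _ _)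
  obtain ⟨A, hAsub, hAinf, hAconv⟩ :=
    diagonal (fun k n => hh K n (xe k)) A1 hA1inf
      (fun k s hs => bw_along hs _ (fun n => hh_mem K n _))
  refine ⟨A, hAinf, fun x => ?_⟩
  by_cases hxD : x ∈ insert (0:ℝ) D
  · rw [hxe] at hxD
    obtain ⟨k, rfl⟩ := hxD
    exact hAconv k
  · have hxD' : x ∉ D := fun h => hxD (Set.mem_insert_of_mem _ h)
    have hEq : sSup (S x) = sInf (I x) := le_antisymm (hSI x) (not_lt.1 hxD')
    set l := sSup (S x) with hldef
    refine ⟨l, fun ε hε => ?_⟩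
    obtain ⟨a, ⟨p, hp, rfl⟩, hpa⟩ :=
      exists_lt_of_lt_csSup (hSne x) (show l - ε/2 < sSup (S x) by rw [← hldef]; linarith)
    obtain ⟨b, ⟨q, hq, rfl⟩, hqb⟩ :=
      exists_lt_of_csInf_lt (hIne x) (show sInf (I x) < l + ε/2 by rw [← hEq]; linarith)
    simp only [Set.mem_setOf_eq] at hp hq
    have fp := ((hL p).mono hAsub) (ε/2) (half_pos hε)
    have fq := ((hL q).mono hAsub) (ε/2) (half_pos hε)
    apply (fp.union fq).subset
    rintro n ⟨hnA, hbad⟩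
    by_cases h1 : ε/2 ≤ |hh K n (p : ℝ) - L p|
    · exact Or.inl ⟨hnA, h1⟩
    by_cases h2 : ε/2 ≤ |hh K n (q : ℝ) - L q|
    · exact Or.inr ⟨hnA, h2⟩
    exfalso
    rw [not_le, abs_sub_lt_iff] at h1 h2
    have hmp := hh_mono K n hp.le
    have hmq := hh_mono K n hq.le
    rw [le_abs] at hbad
    rcases hbad with h | h
    · linarith [h2.1, hqb]
    · linarith [h1.2, hpa]

lemma sorgenfrey_isOpen_Ico (a b : ℝ) (hab : a < b) :
    IsOpen[sorgenfreyTop] (Set.Ico a b) :=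
  TopologicalSpace.GenerateOpen.basic _ ⟨a, b, hab, rfl⟩

lemma sorgenfrey_basis {U : Set ℝ} (hU : IsOpen[sorgenfreyTop] U) {x : ℝ} (hx : x ∈ U) :
    ∃ c, x < c ∧ Set.Ico x c ⊆ U := by
  have : ∀ V : Set ℝ,
      TopologicalSpace.GenerateOpen {s : Set ℝ | ∃ a b : ℝ, a < b ∧ s = Set.Ico a b} V →
      ∀ y ∈ V, ∃ c, y < c ∧ Set.Ico y c ⊆ V := by
    intro V hV
    induction hV with
    | basic s hs =>
      rintro y hy
      obtain ⟨a, b, hab, rfl⟩ := hs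
      exact ⟨b, hy.2, fun z hz => ⟨le_trans hy.1 hz.1, hz.2⟩⟩
    | univ => exact fun y _ => ⟨y + 1, by linarith, fun z _ => trivial⟩
    | inter s t hs ht ihs iht =>
      intro y hy
      obtain ⟨c, hc, hsc⟩ := ihs y hy.1
      obtain ⟨d, hd, htd⟩ := iht y hy.2
      exact ⟨min c d, lt_min hc hd,
        fun z hz => ⟨hsc ⟨hz.1, lt_of_lt_of_le hz.2 (min_le_left _ _)⟩,
          htd ⟨hz.1, lt_of_lt_of_le hz.2 (min_le_right _ _)⟩⟩⟩
    | sUnion C hC ih =>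
      rintro y ⟨s, hsC, hys⟩
      obtain ⟨c, hc, h⟩ := ih s hsC y hys
      exact ⟨c, hc, fun z hz => ⟨s, hsC, h hz⟩⟩
  exact this U hU x hx

/-- The Sorgenfrey line has the generalized Bolzano–Weierstrass property. -/
theorem stmt8 (K : ℕ → Set ℝ) :
    ∃ A : Set ℕ, A.Infinite ∧ kurLi sorgenfreyTop K A = kurLs sorgenfreyTop K A := by
  obtain ⟨A, hAinf, hAconv⟩ := helly K
  refine ⟨A, hAinf, Set.Subset.antisymm ?_ ?_⟩
  · -- Li ⊆ Ls
    intro x hx U hU hxU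
    have hfin := hx U hU hxU
    apply Set.Infinite.mono (s := A \ {n ∈ A | U ∩ K n = ∅}) ?_ (hAinf.diff hfin)
    rintro n ⟨hnA, hn⟩
    refine ⟨hnA, ?_⟩
    rw [Set.nonempty_iff_ne_empty]
    intro hne
    exact hn ⟨hnA, hne⟩
  · -- Ls ⊆ Li
    intro x hx U hU hxU
    obtain ⟨c, hxc, hIcoU⟩ := sorgenfrey_basis hU hxU
    obtain ⟨l, hl⟩ := hAconv x
    -- from the Ls hypothesis: l ≤ sqz (x + ε) for every ε > 0; we need it at the midpoint
    have hkey : l < sqz c := by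
      set m := x + (c - x) / 2 with hm
      have hxm : x < m := by rw [hm]; linarith
      have hmc : m < c := by rw [hm]; linarith
      have hinf : {n ∈ A | (Set.Ico x m ∩ K n).Nonempty}.Infinite :=
        hx (Set.Ico x m) (sorgenfrey_isOpen_Ico x m hxm) ⟨le_refl x, hxm⟩
      have hle : l ≤ sqz m := by
        by_contra hlt
        push_neg at hlt
        have hδ : 0 < l - sqz m := by linarith
        apply hinf
        apply (hl (l - sqz m) hδ).subset
        rintro n ⟨hnA, hne⟩
        refine ⟨hnA, ?_⟩
        rw [hh_lt_iff K n hxm] at hne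
        rw [abs_sub_comm, le_abs]
        left; linarith
      exact lt_of_le_of_lt hle (sqz_strictMono hmc)
    -- conclude finiteness
    have hδ : 0 < sqz c - l := by linarith
    apply (hl (sqz c - l) hδ).subset
    rintro n ⟨hnA, hne⟩
    refine ⟨hnA, ?_⟩
    have hem : ¬ (Set.Ico x c ∩ K n).Nonempty := by
      rw [Set.not_nonempty_iff_eq_empty]
      apply Set.eq_empty_of_subset_empty
      rw [← hne]
      exact Set.inter_subset_inter_left _ hIcoU
    rw [hh_lt_iff K n hxc, not_lt] at hem
    rw [le_abs]
    left
    simp only []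
    linarith
end

section
/- Let (Kₙ)_{n∈ℕ} be a sequence of subsets of ℝ that converges, in the sense of Kuratowski with respect to the usual topology of ℝ, to a set K. Then the set of points x ∈ K for which there exists r > x such that {n ∈ ℕ : [x,r) ∩ Kₙ = ∅} is infinite is countable. -/
open Set Topology TopologicalSpace

/-- If `(Kₙ)` Kuratowski-converges to `L` in the usual topology of `ℝ`, then
only countably many `x ∈ L` admit an `r > x` such that `[x, r)` misses `Kₙ`
for infinitely many `n`. -/
theorem stmt9 (K : ℕ → Set ℝ) (L : Set ℝ)
    (hLi : kurLi (inferInstance : TopologicalSpace ℝ) K Set.univ = L)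
    (hLs : kurLs (inferInstance : TopologicalSpace ℝ) K Set.univ = L) :
    {x ∈ L | ∃ r : ℝ, x < r ∧ {n : ℕ | Set.Ico x r ∩ K n = ∅}.Infinite}.Countable := by
  set S := {x ∈ L | ∃ r : ℝ, x < r ∧ {n : ℕ | Set.Ico x r ∩ K n = ∅}.Infinite} with hS
  have key : ∀ x ∈ S, ∃ q : ℚ, x < (q : ℝ) ∧ ∀ y ∈ S, x < y → (q : ℝ) ≤ y := by
    rintro x ⟨hxL, r, hxr, hinf⟩
    obtain ⟨q, hq1, hq2⟩ := exists_rat_btwn hxr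
    refine ⟨q, hq1, fun y hy hxy => ?_⟩
    by_contra hlt
    push_neg at hlt
    have hyr : y < r := hlt.trans hq2
    have hyL : y ∈ L := hy.1
    rw [← hLi] at hyL
    have hfin := hyL (Set.Ioo x r) isOpen_Ioo ⟨hxy, hyr⟩
    have hsub : {n : ℕ | Set.Ico x r ∩ K n = ∅} ⊆
        {n ∈ (Set.univ : Set ℕ) | Set.Ioo x r ∩ K n = ∅} := by
      intro n hn
      refine ⟨trivial, Set.eq_empty_of_subset_empty ?_⟩
      rw [← hn]
      exact Set.inter_subset_inter_left _ Set.Ioo_subset_Ico_self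
    exact hinf (hfin.subset hsub)
  choose! q hq1 hq2 using key
  have hinj : Function.Injective (fun x : S => q x) := by
    rintro ⟨x, hx⟩ ⟨y, hy⟩ hxy
    simp only at hxy
    ext
    rcases lt_trichotomy x y with h | h | h
    · exfalso
      have h1 : (q x : ℝ) ≤ y := hq2 x hx y hy h
      have h2 : y < (q y : ℝ) := hq1 y hy
      rw [hxy] at h1
      exact absurd (h1.trans_lt h2) (lt_irrefl _)
    · exact h
    · exfalso
      have h1 : (q y : ℝ) ≤ x := hq2 y hy x hx h
      have h2 : x < (q x : ℝ) := hq1 x hx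
      rw [← hxy] at h1
      exact absurd (h1.trans_lt h2) (lt_irrefl _)
  have : Countable S := hinj.countable
  exact Set.countable_coe_iff.mp this
end

section
/- Let X be a countably compact topological space in which every sequence of subsets has a subsequence converging in the sense of Kuratowski. Then X is sequentially compact: every sequence of points of X has a subsequence converging to a point of X. -/
open Set Topology TopologicalSpace

/-- A countably compact space with the generalized Bolzano–Weierstrass
property is sequentially compact. -/
theorem stmt10 {X : Type*} [t : TopologicalSpace X]
    (hcc : ∀ U : ℕ → Set X, (∀ n, IsOpen (U n)) → (⋃ n, U n) = Set.univ →
      ∃ F : Finset ℕ, (⋃ n ∈ F, U n) = Set.univ)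
    (hGBW : ∀ K : ℕ → Set X, ∃ A : Set ℕ, A.Infinite ∧ kurLi t K A = kurLs t K A)
    (x : ℕ → X) :
    ∃ (p : X) (φ : ℕ → ℕ), StrictMono φ ∧
      Filter.Tendsto (x ∘ φ) Filter.atTop (nhds p) := by
  obtain ⟨A, hA, hLiLs⟩ := hGBW (fun n => {x n})
  have hAinf : {n | n ∈ A}.Infinite := hA
  set φ : ℕ → ℕ := Nat.nth (· ∈ A) with hφdef
  have hφmono : StrictMono φ := Nat.nth_strictMono hAinf
  have hφmem : ∀ k, φ k ∈ A := fun k => Nat.nth_mem_of_infinite hAinf k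
  set C : ℕ → Set X := fun k => closure {y | ∃ n, k ≤ n ∧ y = x (φ n)} with hC
  have hCanti : ∀ {j k : ℕ}, j ≤ k → C k ⊆ C j := by
    intro j k hjk
    exact closure_mono (fun y ⟨n, hn, hy⟩ => ⟨n, hjk.trans hn, hy⟩)
  have hne : (⋂ k, C k).Nonempty := by
    by_contra h
    rw [Set.not_nonempty_iff_eq_empty] at h
    have hcov : (⋃ k, (C k)ᶜ) = Set.univ := by
      rw [← Set.compl_iInter, h, Set.compl_empty]
    obtain ⟨F, hF⟩ := hcc _ (fun k => isClosed_closure.isOpen_compl) hcov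
    set N := F.sup id with hN
    have hmem : x (φ N) ∈ C N := subset_closure ⟨N, le_refl N, rfl⟩
    have : x (φ N) ∈ ⋃ n ∈ F, (C n)ᶜ := hF ▸ Set.mem_univ _
    obtain ⟨k, hkF, hk⟩ := Set.mem_iUnion₂.1 this
    exact hk (hCanti (Finset.le_sup (f := id) hkF) hmem)
  obtain ⟨p, hp⟩ := hne
  have hpLs : p ∈ kurLs t (fun n => {x n}) A := by
    intro U hU hpU
    apply Set.infinite_of_forall_exists_gt
    intro m
    have hpC : p ∈ C (m + 1) := Set.mem_iInter.1 hp (m + 1)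
    obtain ⟨y, hyU, n, hn, hy⟩ := mem_closure_iff.1 hpC U hU hpU
    refine ⟨φ n, ⟨hφmem n, ⟨x (φ n), hy ▸ hyU, rfl⟩⟩, ?_⟩
    exact lt_of_lt_of_le (Nat.lt_succ_of_le (le_refl m)) (le_trans hn (hφmono.le_apply))
  have hpLi : p ∈ kurLi t (fun n => {x n}) A := hLiLs ▸ hpLs
  refine ⟨p, φ, hφmono, ?_⟩
  rw [tendsto_nhds]
  intro U hU hpU
  have hfin : {n ∈ A | U ∩ {x n} = ∅}.Finite := hpLi U hU hpU
  obtain ⟨N, hN⟩ := hfin.bddAbove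
  rw [Filter.mem_atTop_sets]
  refine ⟨N + 1, fun k hk => ?_⟩
  by_contra hxk
  have : φ k ∈ {n ∈ A | U ∩ {x n} = ∅} := by
    refine ⟨hφmem k, ?_⟩
    ext y
    simp only [Set.mem_inter_iff, Set.mem_singleton_iff, Set.mem_empty_iff_false, iff_false]
    rintro ⟨hyU, rfl⟩
    exact hxk hyU
  have h1 : φ k ≤ N := hN this
  have h2 : k ≤ φ k := hφmono.le_apply
  omega
end

section
/- Let X be an infinite compact Hausdorff space in which every convergent sequence of points is eventually constant (X has no non-trivial convergent sequences). Then there is a sequence (Kₙ)_{n∈ℕ} of subsets of X with no subsequence converging in the sense of Kuratowski. -/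
open Set Topology TopologicalSpace

/-- An infinite compact Hausdorff space with no non-trivial convergent
sequences has a sequence of subsets with no Kuratowski-convergent
subsequence. -/
theorem stmt11 {X : Type*} [t : TopologicalSpace X] [Infinite X]
    [CompactSpace X] [T2Space X]
    (htriv : ∀ (x : ℕ → X) (p : X), Filter.Tendsto x Filter.atTop (nhds p) →
      ∃ m : ℕ, ∀ n ≥ m, x n = x m) :
    ∃ K : ℕ → Set X, ∀ A : Set ℕ, A.Infinite → kurLi t K A ≠ kurLs t K A := by
  classical
  set e := Infinite.natEmbedding X with he
  refine ⟨fun n => {e n}, fun A hA hEq => ?_⟩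
  set f : ℕ → ℕ := Nat.nth (· ∈ A) with hf
  have hfA : ∀ n, f n ∈ A := fun n => Nat.nth_mem_of_infinite hA n
  have hfmono : StrictMono f := Nat.nth_strictMono hA
  set y : ℕ → X := fun n => e (f n) with hy
  obtain ⟨p, hp⟩ := exists_clusterPt_of_compactSpace (Filter.map y Filter.atTop)
  have hpLs : p ∈ kurLs t (fun n => {e n}) A := by
    intro U hU hpU
    have hfreq : ∃ᶠ n in Filter.atTop, y n ∈ U :=
      mapClusterPt_iff_frequently.mp hp U (hU.mem_nhds hpU)
    have hinf : {n : ℕ | y n ∈ U}.Infinite := Nat.frequently_atTop_iff_infinite.mp hfreq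
    have : (f '' {n : ℕ | y n ∈ U}).Infinite := hinf.image hfmono.injective.injOn
    refine this.mono ?_
    rintro _ ⟨n, hn, rfl⟩
    exact ⟨hfA n, e (f n), hn, rfl⟩
  have hpLi : p ∈ kurLi t (fun n => {e n}) A := hEq ▸ hpLs
  have htend : Filter.Tendsto y Filter.atTop (𝓝 p) := by
    rw [tendsto_nhds]
    intro U hU hpU
    have hfin := hpLi U hU hpU
    obtain ⟨N, hN⟩ := hfin.bddAbove
    show ∀ᶠ n in Filter.atTop, y n ∈ U
    rw [Filter.eventually_atTop]
    refine ⟨N + 1, fun n hn => ?_⟩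
    by_contra hyn
    have hmem : f n ∈ {n ∈ A | U ∩ {e n} = ∅} := by
      refine ⟨hfA n, ?_⟩
      ext z
      simp only [Set.mem_inter_iff, Set.mem_singleton_iff, Set.mem_empty_iff_false, iff_false]
      rintro ⟨hz, rfl⟩
      exact hyn hz
    have := hN hmem
    have h2 : n ≤ f n := hfmono.le_apply
    omega
  obtain ⟨m, hm⟩ := htriv y p htend
  have heq2 := hm (m + 1) (by omega)
  have := hfmono.injective (e.injective heq2)
  omega
end

section
/- Let κ be an ordinal such that for every ordinal λ < κ, every ⊆*-decreasing transfinite sequence (A_α)_{α<λ} of infinite subsets of ℕ has an infinite pseudo-intersection, i.e., an infinite A ⊆ ℕ with A ⊆* A_α for all α < λ (this holds whenever κ ≤ 𝔱, the tower number). Let X be a topological space having a sequence (Kₙ)_{n∈ℕ} of subsets with no subsequence converging in the sense of Kuratowski. Then X contains a right-separated transfinite sequence of length κ: points (p_α)_{α<κ} such that for every α < κ, p_α does not belong to the closure of {p_β : α < β < κ}. -/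
open Set Topology TopologicalSpace

/-- The invariant for a triple `d = (p, U, A)` built at stage `α`, relative to
prior choices `g`. -/
def kurGood {X : Type*} (t : TopologicalSpace X) (K : ℕ → Set X)
    (α : Ordinal) (g : ∀ β : Ordinal, β < α → X × Set X × Set ℕ)
    (d : X × Set X × Set ℕ) : Prop :=
  d.2.2.Infinite ∧ IsOpen[t] d.2.1 ∧ d.1 ∈ d.2.1 ∧
    (∀ n ∈ d.2.2, d.2.1 ∩ K n = ∅) ∧
    ∃ B : Set ℕ, d.1 ∈ kurLs t K B ∧ d.2.2 ⊆ B ∧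
      ∀ β (h : β < α), (B \ (g β h).2.2).Finite

open Classical in
/-- Transfinite recursion choosing good triples when they exist. -/
noncomputable def kurF {X : Type*} (t : TopologicalSpace X) (K : ℕ → Set X) (x0 : X) :
    Ordinal → X × Set X × Set ℕ :=
  WellFounded.fix Ordinal.lt_wf (fun α g =>
    if h : ∃ d, kurGood t K α g d then h.choose else (x0, ∅, ∅))

open Classical in
theorem kurF_eq {X : Type*} (t : TopologicalSpace X) (K : ℕ → Set X) (x0 : X) (α : Ordinal) :
    kurF t K x0 α =
      if h : ∃ d, kurGood t K α (fun β _ => kurF t K x0 β) d then h.choose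
      else (x0, ∅, ∅) :=
  WellFounded.fix_eq _ _ _

theorem kurLi_subset_kurLs {X : Type*} (t : TopologicalSpace X) (K : ℕ → Set X)
    {A : Set ℕ} (hA : A.Infinite) : kurLi t K A ⊆ kurLs t K A := by
  intro x hx U hU hxU
  intro hfin
  apply hA
  have h1 : {n ∈ A | U ∩ K n = ∅}.Finite := hx U hU hxU
  refine ((h1.union hfin).subset ?_)
  intro n hn
  rcases (U ∩ K n).eq_empty_or_nonempty with h | h
  · exact Or.inl ⟨hn, h⟩
  · exact Or.inr ⟨hn, h⟩

/-- If `κ` is an ordinal below which every `⊆*`-decreasing transfinite sequence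
of infinite subsets of `ℕ` has an infinite pseudo-intersection (e.g. `κ ≤ 𝔱`),
and `X` has a sequence of subsets with no Kuratowski-convergent subsequence,
then `X` contains a right-separated transfinite sequence of length `κ`. -/
theorem stmt12 {X : Type*} [t : TopologicalSpace X] (κ : Ordinal)
    (hκ : ∀ lam : Ordinal, lam < κ →
      ∀ A : {o : Ordinal // o < lam} → Set ℕ,
        (∀ i, (A i).Infinite) →
        (∀ i j : {o : Ordinal // o < lam}, (i : Ordinal) ≤ (j : Ordinal) →
          (A j \ A i).Finite) →
        ∃ B : Set ℕ, B.Infinite ∧ ∀ i, (B \ A i).Finite)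
    (K : ℕ → Set X)
    (hK : ∀ A : Set ℕ, A.Infinite → kurLi t K A ≠ kurLs t K A) :
    ∃ p : {o : Ordinal // o < κ} → X,
      ∀ i : {o : Ordinal // o < κ},
        p i ∉ closure {x : X | ∃ j : {o : Ordinal // o < κ},
          (i : Ordinal) < (j : Ordinal) ∧ x = p j} := by
  classical
  -- `X` is nonempty
  have hX : Nonempty X := by
    by_contra h
    rw [not_nonempty_iff] at h
    exact hK Set.univ Set.infinite_univ
      (by rw [Set.eq_empty_of_isEmpty (kurLi t K univ), Set.eq_empty_of_isEmpty (kurLs t K univ)])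
  obtain ⟨x0⟩ := hX
  -- main invariant by transfinite induction
  have key : ∀ α : Ordinal, α < κ →
      kurGood t K α (fun β _ => kurF t K x0 β) (kurF t K x0 α) := by
    intro α
    induction α using Ordinal.induction with
    | h α ih =>
      intro hα
      have hex : ∃ d, kurGood t K α (fun β _ => kurF t K x0 β) d := by
        obtain ⟨B, hBinf, hB⟩ := hκ α hα (fun i => (kurF t K x0 i.1).2.2)
          (fun i => (ih i.1 i.2 (i.2.trans hα)).1)
          (fun i j hij => by
            rcases eq_or_lt_of_le hij with h | h
            · have : i = j := Subtype.ext h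
              subst this
              simp
            · obtain ⟨-, -, -, -, B', _, hsubB', hdec⟩ := ih j.1 j.2 (j.2.trans hα)
              refine (hdec i.1 h).subset ?_
              rintro n ⟨hn1, hn2⟩
              exact ⟨hsubB' hn1, hn2⟩)
        have hne := hK B hBinf
        have hsub := kurLi_subset_kurLs t K hBinf
        obtain ⟨x, hxLs, hxLi⟩ := Set.exists_of_ssubset (hsub.ssubset_of_ne hne)
        simp only [kurLi, mem_setOf_eq] at hxLi
        push_neg at hxLi
        obtain ⟨U, hUopen, hxU, hUinf⟩ := hxLi
        refine ⟨(x, U, {n ∈ B | U ∩ K n = ∅}), hUinf, hUopen, hxU, ?_, B, hxLs, ?_, ?_⟩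
        · intro n hn; exact hn.2
        · exact fun n hn => hn.1
        · intro β hβ; exact hB ⟨β, hβ⟩
      have heq : kurF t K x0 α = hex.choose := by
        rw [kurF_eq, dif_pos hex]
      rw [heq]
      exact hex.choose_spec
  -- construct the right-separated sequence
  refine ⟨fun i => (kurF t K x0 i.1).1, ?_⟩
  intro i hcl
  obtain ⟨-, hUopen, hpU, hUA, -⟩ := key i.1 i.2
  have hsub : {x : X | ∃ j : {o : Ordinal // o < κ},
      (i : Ordinal) < (j : Ordinal) ∧ x = (kurF t K x0 j.1).1} ⊆ (kurF t K x0 i.1).2.1ᶜ := by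
    rintro x ⟨j, hij, rfl⟩ hxU
    obtain ⟨-, -, -, -, B, hLs, hsubB, hdec⟩ := key j.1 j.2
    have hBi := hdec i.1 hij
    have hinf : {n ∈ B | ((kurF t K x0 i.1).2.1 ∩ K n).Nonempty}.Infinite :=
      hLs _ hUopen hxU
    refine hinf (hBi.subset ?_)
    rintro n ⟨hnB, hne⟩
    refine ⟨hnB, fun hnA => ?_⟩
    rw [hUA n hnA] at hne
    exact hne.ne_empty rfl
  have hcl' : closure {x : X | ∃ j : {o : Ordinal // o < κ},
      (i : Ordinal) < (j : Ordinal) ∧ x = (kurF t K x0 j.1).1} ⊆ (kurF t K x0 i.1).2.1ᶜ :=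
    closure_minimal hsub hUopen.isClosed_compl
  exact (hcl' hcl) hpU
end

section
/- Every hereditarily Lindelöf topological space has the generalized Bolzano–Weierstrass property: if X is a topological space all of whose subspaces are Lindelöf, then every sequence (Kₙ)_{n∈ℕ} of subsets of X has a subsequence that converges in the sense of Kuratowski. -/
open Set Topology TopologicalSpace

private lemma diagLemma (C : ℕ → Set ℕ)
    (h : ∀ i, {m : ℕ | ∀ j ≤ i, m ∈ C j}.Infinite) :
    ∃ B : Set ℕ, B.Infinite ∧ ∀ i, (B \ C i).Finite := by
  have hex : ∀ i m, ∃ k, (∀ j ≤ i, k ∈ C j) ∧ m < k := by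
    intro i m
    obtain ⟨k, hk, hmk⟩ := (h i).exists_gt m
    exact ⟨k, hk, hmk⟩
  let n : ℕ → ℕ := fun i => Nat.rec (Classical.choose (hex 0 0))
    (fun i prev => Classical.choose (hex (i + 1) prev)) i
  have hmem : ∀ i, ∀ j ≤ i, n i ∈ C j := by
    intro i
    cases i with
    | zero => exact (Classical.choose_spec (hex 0 0)).1
    | succ i => exact (Classical.choose_spec (hex (i + 1) (n i))).1
  have hlt : ∀ i, n i < n (i + 1) := fun i =>
    (Classical.choose_spec (hex (i + 1) (n i))).2
  have hsm : StrictMono n := strictMono_nat_of_lt_succ hlt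
  refine ⟨Set.range n, Set.infinite_range_of_injective hsm.injective, fun i => ?_⟩
  have hss : Set.range n \ C i ⊆ n '' (Set.Iio i) := by
    rintro x ⟨⟨j, rfl⟩, hx⟩
    refine ⟨j, ?_, rfl⟩
    by_contra hj
    exact hx (hmem j i (Nat.le_of_not_lt hj))
  exact ((Set.finite_Iio i).image n).subset hss

open Classical in
noncomputable def towerAux (Nf : Set ℕ → Set ℕ) : Ordinal.{0} → Set ℕ :=
  Ordinal.lt_wf.fix fun α ih =>
    if h : ∃ B : Set ℕ, B.Infinite ∧ ∀ β (hβ : β < α), (B \ Nf (ih β hβ)).Finite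
    then h.choose else ∅

open Classical in
lemma towerAux_eq (Nf : Set ℕ → Set ℕ) (α : Ordinal.{0}) :
    towerAux Nf α =
      if h : ∃ B : Set ℕ, B.Infinite ∧ ∀ β (_ : β < α), (B \ Nf (towerAux Nf β)).Finite
      then h.choose else ∅ :=
  Ordinal.lt_wf.fix_eq _ α

lemma tower_spec (Nf : Set ℕ → Set ℕ) (hNsub : ∀ A, Nf A ⊆ A)
    (hNinf : ∀ A, A.Infinite → (Nf A).Infinite) :
    ∀ α : Ordinal.{0}, α < (Cardinal.aleph 1).ord →
      (towerAux Nf α).Infinite ∧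
        ∀ β < α, (towerAux Nf α \ Nf (towerAux Nf β)).Finite := by
  intro α
  induction α using Ordinal.induction with
  | h α IH =>
  intro hα
  have hexB : ∃ B : Set ℕ, B.Infinite ∧
      ∀ β (_ : β < α), (B \ Nf (towerAux Nf β)).Finite := by
    rcases eq_or_ne α 0 with rfl | hα0
    · exact ⟨Set.univ, Set.infinite_univ, fun β hβ => absurd hβ (not_lt_of_ge (zero_le (a := β)))⟩
    · have hIio : (Set.Iio α).Countable := by
        have hcard : α.card < Cardinal.aleph 1 := Cardinal.lt_ord.mp hα
        have hlt : (Cardinal.mk (Set.Iio α)) < Cardinal.aleph 1 := by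
          rw [Ordinal.mk_Iio_ordinal]
          have h2 := (Cardinal.lift_lt.{0,1}).mpr hcard
          rwa [Cardinal.lift_aleph, Ordinal.lift_one] at h2
        exact (Cardinal.countable_iff_lt_aleph_one _).2 hlt
      have hne0 : (Set.Iio α).Nonempty := ⟨0, pos_iff_ne_zero.2 hα0⟩
      obtain ⟨f, hf⟩ := hIio.exists_eq_range hne0
      have hfα : ∀ i, f i < α := fun i => by
        have h1 : f i ∈ Set.Iio α := by rw [hf]; exact Set.mem_range_self i
        exact h1
      have hDinf : ∀ i, {m : ℕ | ∀ j ≤ i, m ∈ Nf (towerAux Nf (f j))}.Infinite := by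
        intro i
        obtain ⟨j0, hj0mem, hj0max⟩ :=
          (Finset.range (i + 1)).exists_max_image f ⟨0, Finset.mem_range.2 (Nat.succ_pos i)⟩
        have hβα : f j0 < α := hfα j0
        obtain ⟨hgβinf, hgβ⟩ := IH (f j0) hβα (hβα.trans hα)
        have hNβinf := hNinf (towerAux Nf (f j0)) hgβinf
        have hfin : ∀ j ≤ i, (Nf (towerAux Nf (f j0)) \ Nf (towerAux Nf (f j))).Finite := by
          intro j hj
          rcases eq_or_lt_of_le (hj0max j (Finset.mem_range.2 (Nat.lt_succ_of_le hj)))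
            with heq | hlt
          · rw [heq]; simp
          · exact (hgβ (f j) hlt).subset
              (Set.diff_subset_diff_left (hNsub (towerAux Nf (f j0))))
        have hsub2 : Nf (towerAux Nf (f j0)) \
            {m : ℕ | ∀ j ≤ i, m ∈ Nf (towerAux Nf (f j))} ⊆
            ⋃ j ∈ Finset.range (i + 1),
              (Nf (towerAux Nf (f j0)) \ Nf (towerAux Nf (f j))) := by
          rintro m ⟨hm, hm2⟩
          simp only [Set.mem_setOf_eq, not_forall] at hm2
          obtain ⟨j, hj, hmj⟩ := hm2
          exact Set.mem_biUnion (Finset.mem_range.2 (Nat.lt_succ_of_le hj)) ⟨hm, hmj⟩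
        have hfin2 : (Nf (towerAux Nf (f j0)) \
            {m : ℕ | ∀ j ≤ i, m ∈ Nf (towerAux Nf (f j))}).Finite := by
          refine Set.Finite.subset ?_ hsub2
          exact Set.Finite.biUnion (Finset.range (i + 1)).finite_toSet fun j hj =>
            hfin j (Nat.lt_succ_iff.1 (Finset.mem_range.1 hj))
        have hinf3 : (Nf (towerAux Nf (f j0)) \ (Nf (towerAux Nf (f j0)) \
            {m : ℕ | ∀ j ≤ i, m ∈ Nf (towerAux Nf (f j))})).Infinite :=
          hNβinf.diff hfin2
        refine hinf3.mono ?_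
        rintro m ⟨hm1, hm2⟩
        by_contra hmD
        exact hm2 ⟨hm1, hmD⟩
      obtain ⟨B, hBinf, hB⟩ := diagLemma (fun j => Nf (towerAux Nf (f j))) hDinf
      refine ⟨B, hBinf, fun β hβ => ?_⟩
      have hmem : β ∈ Set.range f := by rw [← hf]; exact hβ
      obtain ⟨i, rfl⟩ := hmem
      exact hB i
  have hg_eq : towerAux Nf α = hexB.choose := by
    rw [towerAux_eq]
    exact dif_pos hexB
  rw [hg_eq]
  obtain ⟨h1, h2⟩ := hexB.choose_spec
  refine ⟨h1, fun β hβ => ?_⟩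
  exact h2 β hβ


/-- Every hereditarily Lindelöf space has the generalized Bolzano–Weierstrass
property. -/
theorem stmt13 {X : Type*} [t : TopologicalSpace X]
    (hL : ∀ Y : Set X, IsLindelof Y) (K : ℕ → Set X) :
    ∃ A : Set ℕ, A.Infinite ∧ kurLi t K A = kurLs t K A := by
  classical
  by_contra hcon
  push_neg at hcon
  have hspec : ∀ A : Set ℕ, A.Infinite → ∃ x : X, ∃ U : Set X,
      x ∈ kurLs t K A ∧ IsOpen[t] U ∧ x ∈ U ∧ {n ∈ A | U ∩ K n = ∅}.Infinite := by
    intro A hA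
    have hsub : kurLi t K A ⊆ kurLs t K A := by
      intro x hx U hU hxU
      have hfin := hx U hU hxU
      have hss : A \ {n ∈ A | U ∩ K n = ∅} ⊆ {n ∈ A | (U ∩ K n).Nonempty} := by
        rintro n ⟨hnA, hn⟩
        refine ⟨hnA, Set.nonempty_iff_ne_empty.2 fun he => hn ⟨hnA, he⟩⟩
      exact (hA.diff hfin).mono hss
    have hne := hcon A hA
    have hx : ∃ x, x ∈ kurLs t K A ∧ x ∉ kurLi t K A := by
      by_contra hno
      push_neg at hno
      exact hne (Set.Subset.antisymm hsub hno)
    obtain ⟨x, hxLs, hxnLi⟩ := hx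
    simp only [kurLi, Set.mem_setOf_eq] at hxnLi
    push_neg at hxnLi
    obtain ⟨U, hU, hxU, hinf⟩ := hxnLi
    exact ⟨x, U, hxLs, hU, hxU, hinf⟩
  choose xf Uf hLsf hUof hxUf hNinf using hspec
  have hXne : Nonempty X := ⟨xf Set.univ Set.infinite_univ⟩
  let xg : Set ℕ → X := fun A => if h : A.Infinite then xf A h else hXne.some
  let Ug : Set ℕ → Set X := fun A => if h : A.Infinite then Uf A h else ∅
  let Nf : Set ℕ → Set ℕ := fun A => {n ∈ A | Ug A ∩ K n = ∅}
  have hUg : ∀ A (h : A.Infinite), Ug A = Uf A h := fun A h => dif_pos h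
  have hxg : ∀ A (h : A.Infinite), xg A = xf A h := fun A h => dif_pos h
  have hNsub : ∀ A, Nf A ⊆ A := fun A => Set.sep_subset _ _
  have hNinf' : ∀ A, A.Infinite → (Nf A).Infinite := fun A h => by
    have he : Nf A = {n ∈ A | Uf A h ∩ K n = ∅} := by
      simp only [Nf, hUg A h]
    rw [he]; exact hNinf A h
  have hLs' : ∀ A, A.Infinite → xg A ∈ kurLs t K A := fun A h => by
    rw [hxg A h]; exact hLsf A h
  have hUo' : ∀ A, IsOpen[t] (Ug A) := fun A => by
    by_cases h : A.Infinite
    · rw [hUg A h]; exact hUof A h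
    · simp only [Ug, dif_neg h]; exact isOpen_empty
  have hxU' : ∀ A, A.Infinite → xg A ∈ Ug A := fun A h => by
    rw [hxg A h, hUg A h]; exact hxUf A h
  have hmain := tower_spec Nf hNsub hNinf'
  have hsep : ∀ β α : Ordinal.{0}, β < α → α < (Cardinal.aleph 1).ord →
      xg (towerAux Nf α) ∉ Ug (towerAux Nf β) := by
    intro β α hβα hα hmem
    have hαinf := (hmain α hα).1
    have hfin := (hmain α hα).2 β hβα
    have hinf2 := hLs' (towerAux Nf α) hαinf (Ug (towerAux Nf β))
      (hUo' (towerAux Nf β)) hmem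
    refine hinf2 (hfin.subset ?_)
    rintro n ⟨hn1, hn2⟩
    refine ⟨hn1, fun hnN => ?_⟩
    obtain ⟨-, he⟩ := hnN
    rw [he] at hn2
    exact hn2.ne_empty rfl
  let Y : Set X := (fun α => xg (towerAux Nf α)) '' (Set.Iio (Cardinal.aleph 1).ord)
  let Uo : Ordinal.{0} → Set X := fun α =>
    if α < (Cardinal.aleph 1).ord then Ug (towerAux Nf α) else ∅
  have hUoOpen : ∀ α, IsOpen (Uo α) := fun α => by
    by_cases h : α < (Cardinal.aleph 1).ord
    · simp only [Uo, if_pos h]; exact hUo' (towerAux Nf α)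
    · simp only [Uo, if_neg h]; exact isOpen_empty
  have hcov : Y ⊆ ⋃ α, Uo α := by
    rintro x ⟨α, hα, rfl⟩
    refine Set.mem_iUnion.2 ⟨α, ?_⟩
    have hUoα : Uo α = Ug (towerAux Nf α) := if_pos hα
    rw [hUoα]
    exact hxU' (towerAux Nf α) ((hmain α hα).1)
  obtain ⟨r, hrct, hrcov⟩ := (hL Y).elim_countable_subcover Uo hUoOpen hcov
  set r' : Set Ordinal.{0} := r ∩ Set.Iio (Cardinal.aleph 1).ord with hr'
  have hzeroY : ∀ δ, δ < (Cardinal.aleph 1).ord →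
      ∃ α ∈ r', xg (towerAux Nf δ) ∈ Ug (towerAux Nf α) := by
    intro δ hδ
    have hY : xg (towerAux Nf δ) ∈ Y := ⟨δ, hδ, rfl⟩
    obtain ⟨α, hαr, hmem⟩ := Set.mem_iUnion₂.1 (hrcov hY)
    by_cases h : α < (Cardinal.aleph 1).ord
    · refine ⟨α, ⟨hαr, h⟩, ?_⟩
      simpa only [Uo, if_pos h] using hmem
    · simp only [Uo, if_neg h] at hmem
      exact absurd hmem (Set.notMem_empty _)
  rcases Set.eq_empty_or_nonempty r' with hre | hrne
  · obtain ⟨α, hα, -⟩ := hzeroY 0 (Cardinal.isSuccLimit_ord (Cardinal.aleph0_le_aleph 1)).pos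
    rw [hre] at hα
    exact hα
  · obtain ⟨f, hf⟩ := (hrct.mono Set.inter_subset_left).exists_eq_range hrne
    have hfω : ∀ i, f i < (Cardinal.aleph 1).ord := fun i => by
      have h1 : f i ∈ r' := by rw [hr', hf]; exact Set.mem_range_self i
      exact h1.2
    have hsup : iSup f < (Cardinal.aleph 1).ord :=
      by rw [Cardinal.ord_aleph] at hfω ⊢; exact Ordinal.iSup_lt_omega_one hfω
    have hδω : Order.succ (iSup f) < (Cardinal.aleph 1).ord :=
      (Cardinal.isSuccLimit_ord (Cardinal.aleph0_le_aleph 1)).succ_lt hsup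
    obtain ⟨α, hαr', hmem⟩ := hzeroY (Order.succ (iSup f)) hδω
    have hmem2 : α ∈ Set.range f := by rw [← hf]; exact hαr'
    obtain ⟨i, rfl⟩ := hmem2
    have hαδ : f i < Order.succ (iSup f) :=
      lt_of_le_of_lt (Ordinal.le_iSup f i) (Order.lt_succ _)
    exact hsep (f i) (Order.succ (iSup f)) hαδ hδω hmem
end

section
/- Let κ be a cardinal of uncountable cofinality such that no family of subsets of ℕ of cardinality strictly less than κ is a splitting family (e.g., κ = 𝔰, the splitting number). Let (x_α)_{α<κ} be an injective transfinite sequence of real numbers, let X = {x_α : α < κ}, and for α < κ let V_α = {x_ξ : ξ ≤ α}. Equip X with the topology 𝒯 generated by the subspace topology inherited from the usual topology of ℝ together with all the sets V_α, α < κ. Then every sequence (Kₙ)_{n∈ℕ} of subsets of (X,𝒯) has a subsequence that converges in the sense of Kuratowski. -/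
open Set Topology TopologicalSpace

/-- The topology on `X = {x_α : α < κ}` generated by the subspace topology
inherited from the usual topology of `ℝ` together with the initial segments
`V_α = {x_ξ : ξ ≤ α}`. -/
def vTop {κ : Cardinal} (x : {o : Ordinal // o < κ.ord} → ℝ) :
    TopologicalSpace ↥(Set.range x) :=
  TopologicalSpace.generateFrom
    ({V : Set ↥(Set.range x) | ∃ U : Set ℝ, IsOpen U ∧ V = Subtype.val ⁻¹' U} ∪
      {V : Set ↥(Set.range x) | ∃ α : {o : Ordinal // o < κ.ord},
        V = {p : ↥(Set.range x) | ∃ ξ : {o : Ordinal // o < κ.ord},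
          (ξ : Ordinal) ≤ (α : Ordinal) ∧ (p : ℝ) = x ξ}})

namespace Stmt15Aux

variable {κ : Cardinal} (x : {o : Ordinal // o < κ.ord} → ℝ)
  (K : ℕ → Set ↥(Set.range x))

/-- The set of `n` such that `K n` meets `Ioo q r ∩ V_α`. -/
def T (q r : ℚ) (α : {o : Ordinal // o < κ.ord}) : Set ℕ :=
  {n | ∃ ξ : {o : Ordinal // o < κ.ord}, (ξ : Ordinal) ≤ (α : Ordinal) ∧
    x ξ ∈ Set.Ioo (q : ℝ) (r : ℝ) ∧
    (⟨x ξ, Set.mem_range_self ξ⟩ : ↥(Set.range x)) ∈ K n}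

/-- Indices `ξ` (as ordinals) witnessing that `K n` meets `Ioo q r` at `x ξ`. -/
def D (q r : ℚ) (n : ℕ) : Set Ordinal :=
  {o | ∃ ξ : {o' : Ordinal // o' < κ.ord}, (ξ : Ordinal) = o ∧
    x ξ ∈ Set.Ioo (q : ℝ) (r : ℝ) ∧
    (⟨x ξ, Set.mem_range_self ξ⟩ : ↥(Set.range x)) ∈ K n}

lemma mem_T_iff {q r : ℚ} {α : {o : Ordinal // o < κ.ord}} {n : ℕ} :
    n ∈ T x K q r α ↔ (D x K q r n).Nonempty ∧ sInf (D x K q r n) ≤ (α : Ordinal) := by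
  constructor
  · rintro ⟨ξ, h1, h2, h3⟩
    have hm : (ξ : Ordinal) ∈ D x K q r n := ⟨ξ, rfl, h2, h3⟩
    exact ⟨⟨_, hm⟩, (csInf_le' hm).trans h1⟩
  · rintro ⟨hne, hle⟩
    obtain ⟨ξ, hξ, h2, h3⟩ := csInf_mem hne
    exact ⟨ξ, hξ.le.trans hle, h2, h3⟩

lemma countable_rangeT (q r : ℚ) : (Set.range (T x K q r)).Countable := by
  set F : Option ℕ → Set ℕ := fun o =>
    match o with
    | none => {n | (D x K q r n).Nonempty}
    | some m => {n | (D x K q r n).Nonempty ∧ sInf (D x K q r n) < sInf (D x K q r m)}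
    with hF
  apply Set.Countable.mono _ (Set.countable_range F)
  rintro _ ⟨α, rfl⟩
  by_cases hc : ∀ n : ℕ, (D x K q r n).Nonempty → sInf (D x K q r n) ≤ (α : Ordinal)
  · refine ⟨none, ?_⟩
    ext n
    constructor
    · intro h
      have h' : (D x K q r n).Nonempty := h
      exact (mem_T_iff x K).2 ⟨h', hc n h'⟩
    · intro h
      exact ((mem_T_iff x K).1 h).1
  · push_neg at hc
    set M : Set ℕ := {m | (D x K q r m).Nonempty ∧ (α : Ordinal) < sInf (D x K q r m)}
      with hM
    have hMne : M.Nonempty := by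
      obtain ⟨n, hn1, hn2⟩ := hc
      exact ⟨n, hn1, hn2⟩
    set O : Set Ordinal := (fun m => sInf (D x K q r m)) '' M with hO
    have hOne : O.Nonempty := hMne.image _
    obtain ⟨m₀, hm₀M, hm₀⟩ := csInf_mem hOne
    have hm₀' : sInf (D x K q r m₀) = sInf O := hm₀
    refine ⟨some m₀, ?_⟩
    ext n
    constructor
    · intro h
      have h' : (D x K q r n).Nonempty ∧ sInf (D x K q r n) < sInf (D x K q r m₀) := h
      obtain ⟨hne, hlt⟩ := h'
      refine (mem_T_iff x K).2 ⟨hne, ?_⟩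
      by_contra hgt
      have hnM : n ∈ M := ⟨hne, lt_of_not_ge hgt⟩
      have h1 : sInf O ≤ sInf (D x K q r n) := csInf_le (OrderBot.bddBelow O) ⟨n, hnM, rfl⟩
      rw [← hm₀'] at h1
      exact absurd hlt (not_lt.2 h1)
    · intro h
      obtain ⟨hne, hle⟩ := (mem_T_iff x K).1 h
      exact ⟨hne, lt_of_le_of_lt hle hm₀M.2⟩

/-- Neighborhood base: every open set containing `p = x β` contains a basic
set `Ioo q r ∩ V_β`. -/
lemma nbhd_base (hx : Function.Injective x) (U : Set ↥(Set.range x))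
    (hU : IsOpen[vTop x] U) (p : ↥(Set.range x)) (β : {o : Ordinal // o < κ.ord})
    (hβ : x β = (p : ℝ)) (hp : p ∈ U) :
    ∃ q r : ℝ, q < (p : ℝ) ∧ (p : ℝ) < r ∧
      ∀ ξ : {o : Ordinal // o < κ.ord}, (ξ : Ordinal) ≤ (β : Ordinal) →
        x ξ ∈ Set.Ioo q r → (⟨x ξ, Set.mem_range_self ξ⟩ : ↥(Set.range x)) ∈ U := by
  have hU' : TopologicalSpace.GenerateOpen
      ({V : Set ↥(Set.range x) | ∃ W : Set ℝ, IsOpen W ∧ V = Subtype.val ⁻¹' W} ∪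
        {V : Set ↥(Set.range x) | ∃ α : {o : Ordinal // o < κ.ord},
          V = {p : ↥(Set.range x) | ∃ ξ : {o : Ordinal // o < κ.ord},
            (ξ : Ordinal) ≤ (α : Ordinal) ∧ (p : ℝ) = x ξ}}) U := hU
  clear hU
  induction hU' with
  | basic V hV =>
    rcases hV with hV | hV
    · obtain ⟨W, hW, rfl⟩ := hV
      have hpW : (p : ℝ) ∈ W := hp
      obtain ⟨ε, hε, hball⟩ := Metric.isOpen_iff.1 hW _ hpW
      refine ⟨(p : ℝ) - ε, (p : ℝ) + ε, by linarith, by linarith, ?_⟩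
      intro ξ _ hmem
      apply hball
      rw [Metric.mem_ball, Real.dist_eq, abs_lt]
      obtain ⟨h1, h2⟩ := hmem
      constructor <;> linarith
    · obtain ⟨γ, rfl⟩ := hV
      obtain ⟨ξ₀, hξ₀, hpx⟩ := hp
      have hβξ : β = ξ₀ := hx (by rw [hβ, hpx])
      refine ⟨(p : ℝ) - 1, (p : ℝ) + 1, by linarith, by linarith, ?_⟩
      intro ξ hξβ _
      exact ⟨ξ, hξβ.trans (hβξ ▸ hξ₀), rfl⟩
  | univ =>
    exact ⟨(p : ℝ) - 1, (p : ℝ) + 1, by linarith, by linarith, fun _ _ _ => trivial⟩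
  | inter U₁ U₂ _ _ ih₁ ih₂ =>
    obtain ⟨q₁, r₁, hq₁, hr₁, h₁⟩ := ih₁ hp.1
    obtain ⟨q₂, r₂, hq₂, hr₂, h₂⟩ := ih₂ hp.2
    refine ⟨max q₁ q₂, min r₁ r₂, max_lt hq₁ hq₂, lt_min hr₁ hr₂, ?_⟩
    intro ξ hξ hmem
    obtain ⟨h1, h2⟩ := hmem
    exact ⟨h₁ ξ hξ ⟨lt_of_le_of_lt (le_max_left _ _) h1, lt_of_lt_of_le h2 (min_le_left _ _)⟩,
      h₂ ξ hξ ⟨lt_of_le_of_lt (le_max_right _ _) h1, lt_of_lt_of_le h2 (min_le_right _ _)⟩⟩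
  | sUnion S _ ih =>
    obtain ⟨V, hVS, hpV⟩ := hp
    obtain ⟨q, r, hq, hr, h⟩ := ih V hVS hpV
    exact ⟨q, r, hq, hr, fun ξ hξ hmem => ⟨V, hVS, h ξ hξ hmem⟩⟩

end Stmt15Aux

/-- If `κ` has uncountable cofinality and no family of fewer than `κ` subsets
of `ℕ` is splitting (e.g. `κ = 𝔰`), then the space of Example 8 (a set of `κ`
reals refined by the initial segments `V_α`) has the generalized
Bolzano–Weierstrass property. -/
theorem stmt15 (κ : Cardinal) (hcof : Cardinal.aleph0 < κ.ord.cof)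
    (hsmall : ∀ S : Set (Set ℕ), Cardinal.mk S < κ → ¬ IsSplittingFamily S)
    (x : {o : Ordinal // o < κ.ord} → ℝ) (hx : Function.Injective x)
    (K : ℕ → Set ↥(Set.range x)) :
    ∃ A : Set ℕ, A.Infinite ∧ kurLi (vTop x) K A = kurLs (vTop x) K A := by
  classical
  set 𝒮 : Set (Set ℕ) := ⋃ q : ℚ, ⋃ r : ℚ, Set.range (Stmt15Aux.T x K q r) with h𝒮
  have hcount : 𝒮.Countable :=
    Set.countable_iUnion fun q => Set.countable_iUnion fun r =>
      Stmt15Aux.countable_rangeT x K q r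
  have hκ : Cardinal.aleph0 < κ := lt_of_lt_of_le hcof (Ordinal.cof_ord_le κ)
  have hmk : Cardinal.mk 𝒮 < κ :=
    lt_of_le_of_lt (Set.Countable.le_aleph0 hcount) hκ
  have hnsplit := hsmall 𝒮 hmk
  unfold IsSplittingFamily at hnsplit
  push_neg at hnsplit
  obtain ⟨A, hAinf, hA⟩ := hnsplit
  refine ⟨A, hAinf, ?_⟩
  apply Set.Subset.antisymm
  · -- Li ⊆ Ls
    intro p hp U hUopen hpU
    have hfin := hp U hUopen hpU
    have hsub : A \ {n ∈ A | U ∩ K n = ∅} ⊆ {n ∈ A | (U ∩ K n).Nonempty} := by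
      intro n hn
      refine ⟨hn.1, ?_⟩
      rw [Set.nonempty_iff_ne_empty]
      intro hemp
      exact hn.2 ⟨hn.1, hemp⟩
    exact (hAinf.diff hfin).mono hsub
  · -- Ls ⊆ Li
    intro p hp U hUopen hpU
    obtain ⟨β, hβ⟩ := p.2
    obtain ⟨q, r, hq, hr, hincl⟩ := Stmt15Aux.nbhd_base x hx U hUopen p β hβ hpU
    obtain ⟨q', hqq', hq'p⟩ := exists_rat_btwn hq
    obtain ⟨r', hpr', hr'r⟩ := exists_rat_btwn hr
    -- the basic open set B = Ioo q' r' ∩ V_β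
    set B : Set ↥(Set.range x) :=
      (Subtype.val ⁻¹' Set.Ioo (q' : ℝ) (r' : ℝ)) ∩
        {p : ↥(Set.range x) | ∃ ξ : {o : Ordinal // o < κ.ord},
          (ξ : Ordinal) ≤ (β : Ordinal) ∧ (p : ℝ) = x ξ} with hB
    have hBopen : IsOpen[vTop x] B := by
      show TopologicalSpace.GenerateOpen _ B
      exact TopologicalSpace.GenerateOpen.inter _ _
        (TopologicalSpace.GenerateOpen.basic _ (Or.inl ⟨_, isOpen_Ioo, rfl⟩))
        (TopologicalSpace.GenerateOpen.basic _ (Or.inr ⟨β, rfl⟩))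
    have hpB : p ∈ B := ⟨⟨hq'p, hpr'⟩, β, le_refl _, hβ.symm⟩
    have hBinf : {n ∈ A | (B ∩ K n).Nonempty}.Infinite := hp B hBopen hpB
    set S : Set ℕ := Stmt15Aux.T x K q' r' β with hS
    have hS𝒮 : S ∈ 𝒮 := by
      rw [h𝒮]
      exact Set.mem_iUnion.2 ⟨q', Set.mem_iUnion.2 ⟨r', ⟨β, rfl⟩⟩⟩
    have hsub1 : {n ∈ A | (B ∩ K n).Nonempty} ⊆ A ∩ S := by
      rintro n ⟨hnA, y, ⟨⟨hy1, ξ, hξβ, hyx⟩, hyK⟩⟩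
      refine ⟨hnA, ξ, hξβ, ?_, ?_⟩
      · rw [← hyx]; exact hy1
      · have : y = (⟨x ξ, Set.mem_range_self ξ⟩ : ↥(Set.range x)) := Subtype.ext hyx
        rwa [← this]
    have hASinf : (A ∩ S).Infinite := hBinf.mono hsub1
    have hdfin : (A \ S).Finite := by
      rw [← Set.not_infinite]
      exact Set.not_infinite.2 (hA S hS𝒮 hASinf)
    apply hdfin.subset
    rintro n ⟨hnA, hnemp⟩
    refine ⟨hnA, ?_⟩
    rintro ⟨ξ, hξβ, hmem, hK⟩
    have hxU : (⟨x ξ, Set.mem_range_self ξ⟩ : ↥(Set.range x)) ∈ U := by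
      apply hincl ξ hξβ
      exact ⟨hqq'.trans hmem.1, hmem.2.trans hr'r⟩
    have : (⟨x ξ, Set.mem_range_self ξ⟩ : ↥(Set.range x)) ∈ U ∩ K n := ⟨hxU, hK⟩
    rw [hnemp] at this
    exact this
end

section
/- Let κ be a cardinal of uncountable cofinality, let (x_α)_{α<κ} be an injective transfinite sequence of real numbers, let X = {x_α : α < κ}, and for α < κ let V_α = {x_ξ : ξ ≤ α}. Equip X with the topology 𝒯 generated by the subspace topology inherited from the usual topology of ℝ together with all the sets V_α, α < κ. Then for every subset K ⊆ X there exists δ < κ such that K ∩ V_δ is dense in K with respect to 𝒯 (i.e., K is contained in the 𝒯-closure of K ∩ V_δ). -/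
open Set Topology TopologicalSpace

/-- If `κ` has uncountable cofinality then in the space of Example 8 every
subset `K` has a subset of the form `K ∩ V_δ` which is dense in `K`. -/
theorem stmt16 (κ : Cardinal) (hcof : Cardinal.aleph0 < κ.ord.cof)
    (x : {o : Ordinal // o < κ.ord} → ℝ) (hx : Function.Injective x)
    (K : Set ↥(Set.range x)) :
    ∃ δ : {o : Ordinal // o < κ.ord},
      K ⊆ closure[vTop x] (K ∩ {p : ↥(Set.range x) |
        ∃ ξ : {o : Ordinal // o < κ.ord},
          (ξ : Ordinal) ≤ (δ : Ordinal) ∧ (p : ℝ) = x ξ}) := by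
  classical
  have hord0 : (0 : Ordinal) < κ.ord := by
    rcases eq_zero_or_pos κ.ord with h | h
    · rw [h] at hcof; simp at hcof
    · exact h
  -- the index of a point of the range
  let idx : ↥(Set.range x) → {o : Ordinal // o < κ.ord} := fun p => p.2.choose
  have hidx : ∀ p, x (idx p) = (p : ℝ) := fun p => p.2.choose_spec
  have hidx_uniq : ∀ (p : ↥(Set.range x)) ξ, (p : ℝ) = x ξ → ξ = idx p := by
    intro p ξ h
    exact hx (by rw [hidx p, h])
  -- the sets T (q, r)
  let T : ℚ × ℚ → Set Ordinal := fun qr =>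
    {o : Ordinal | ∃ h : o < κ.ord,
      (⟨x ⟨o, h⟩, Set.mem_range_self _⟩ : ↥(Set.range x)) ∈ K ∧
      x ⟨o, h⟩ ∈ Set.Ioo (qr.1 : ℝ) (qr.2 : ℝ)}
  let g : ℚ × ℚ → Ordinal := fun qr => sInf (T qr)
  have hg : ∀ qr, g qr < κ.ord := by
    intro qr
    rcases eq_empty_or_nonempty (T qr) with h | h
    · simp only [g, h, Ordinal.sInf_empty]  -- maybe not the name
      exact hord0
    · obtain ⟨hlt, -, -⟩ := csInf_mem h
      exact hlt
  have hδ0 : (⨆ qr, g qr) < κ.ord := by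
    apply Ordinal.iSup_lt_ord_lift _ hg
    rw [Cardinal.mk_denumerable, Cardinal.lift_aleph0]
    exact hcof
  refine ⟨⟨⨆ qr, g qr, hδ0⟩, ?_⟩
  set δ : {o : Ordinal // o < κ.ord} := ⟨⨆ qr, g qr, hδ0⟩ with hδdef
  -- the subbasis
  set S : Set (Set ↥(Set.range x)) :=
    ({V : Set ↥(Set.range x) | ∃ U : Set ℝ, IsOpen U ∧ V = Subtype.val ⁻¹' U} ∪
      {V : Set ↥(Set.range x) | ∃ α : {o : Ordinal // o < κ.ord},
        V = {p : ↥(Set.range x) | ∃ ξ : {o : Ordinal // o < κ.ord},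
          (ξ : Ordinal) ≤ (α : Ordinal) ∧ (p : ℝ) = x ξ}}) with hSdef
  -- key invariant for generated open sets
  have key : ∀ W : Set ↥(Set.range x), TopologicalSpace.GenerateOpen S W →
      ∀ p ∈ W, ∃ U : Set ℝ, IsOpen U ∧ (p : ℝ) ∈ U ∧ ∃ α : {o : Ordinal // o < κ.ord},
        (idx p : Ordinal) ≤ (α : Ordinal) ∧
        ∀ q : ↥(Set.range x), (q : ℝ) ∈ U → (idx q : Ordinal) ≤ (α : Ordinal) → q ∈ W := by
    intro W hW
    induction hW with
    | basic W hWS =>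
      intro p hp
      rcases hWS with ⟨U, hU, rfl⟩ | ⟨α, rfl⟩
      · exact ⟨U, hU, hp, idx p, le_refl _, fun q hq _ => hq⟩
      · obtain ⟨ξ, hξle, hξeq⟩ := hp
        have : ξ = idx p := hidx_uniq p ξ hξeq
        refine ⟨Set.univ, isOpen_univ, trivial, α, this ▸ hξle, ?_⟩
        intro q _ hq
        exact ⟨idx q, hq, (hidx q).symm⟩
    | univ => exact fun p _ => ⟨Set.univ, isOpen_univ, trivial, idx p, le_refl _,
        fun _ _ _ => trivial⟩
    | inter W1 W2 h1 h2 ih1 ih2 =>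
      intro p hp
      obtain ⟨U1, hU1, hpU1, α1, hα1, hsub1⟩ := ih1 p hp.1
      obtain ⟨U2, hU2, hpU2, α2, hα2, hsub2⟩ := ih2 p hp.2
      refine ⟨U1 ∩ U2, hU1.inter hU2, ⟨hpU1, hpU2⟩,
        if (α1 : Ordinal) ≤ (α2 : Ordinal) then α1 else α2, ?_, ?_⟩
      · split <;> assumption
      · intro q hq hqle
        have hle1 : (idx q : Ordinal) ≤ (α1 : Ordinal) := by
          split at hqle
          · exact hqle
          · exact hqle.trans (le_of_not_ge (by assumption))
        have hle2 : (idx q : Ordinal) ≤ (α2 : Ordinal) := by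
          split at hqle
          · exact hqle.trans (by assumption)
          · exact hqle
        exact ⟨hsub1 q hq.1 hle1, hsub2 q hq.2 hle2⟩
    | sUnion 𝒮 h ih =>
      intro p hp
      obtain ⟨W, hWmem, hpW⟩ := hp
      obtain ⟨U, hU, hpU, α, hα, hsub⟩ := ih W hWmem p hpW
      exact ⟨U, hU, hpU, α, hα, fun q hq hqle => ⟨W, hWmem, hsub q hq hqle⟩⟩
  -- main density argument
  intro p hpK
  letI : TopologicalSpace ↥(Set.range x) := vTop x
  rw [mem_closure_iff]
  intro W hW hpW
  obtain ⟨U, hU, hpU, α, hα, hsub⟩ := key W hW p hpW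
  obtain ⟨ε, hε, hball⟩ := Metric.isOpen_iff.mp hU _ hpU
  obtain ⟨q, hq1, hq2⟩ := exists_rat_btwn (show (p : ℝ) - ε < (p : ℝ) by linarith)
  obtain ⟨r, hr1, hr2⟩ := exists_rat_btwn (show (p : ℝ) < (p : ℝ) + ε by linarith)
  have hIoo : Set.Ioo (q : ℝ) (r : ℝ) ⊆ U := by
    intro y hy
    apply hball
    rw [Metric.mem_ball, Real.dist_eq, abs_lt]
    constructor <;> [nlinarith [hy.1]; nlinarith [hy.2]]
  have hTne : (T (q, r)).Nonempty := by
    refine ⟨(idx p : Ordinal), (idx p).2, ?_, ?_⟩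
    · convert hpK using 2
      exact (hidx p)
    · rw [hidx p]; exact ⟨hq2, hr1⟩
  obtain ⟨hlt0, hK0, hIoo0⟩ := csInf_mem hTne
  set ξ0 : {o : Ordinal // o < κ.ord} := ⟨sInf (T (q, r)), hlt0⟩ with hξ0def
  have hξ0_le_p : (ξ0 : Ordinal) ≤ (idx p : Ordinal) := by
    apply csInf_le (OrderBot.bddBelow _)
    exact ⟨(idx p).2, by convert hpK using 2; exact hidx p, by rw [hidx p]; exact ⟨hq2, hr1⟩⟩
  have hξ0_le_δ : (ξ0 : Ordinal) ≤ (δ : Ordinal) :=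
    Ordinal.le_iSup g (q, r)
  set y : ↥(Set.range x) := ⟨x ξ0, Set.mem_range_self _⟩ with hydef
  have hidxy : idx y = ξ0 := (hidx_uniq y ξ0 rfl).symm
  refine ⟨y, ?_, ?_, ?_⟩
  · apply hsub y (hIoo hIoo0)
    rw [hidxy]
    exact hξ0_le_p.trans hα
  · exact hK0
  · exact ⟨ξ0, hξ0_le_δ, rfl⟩
end

section
/- The Sorgenfrey plane does not have the generalized Bolzano–Weierstrass property: if ℝ carries the lower-limit topology (generated by the half-open intervals [a,b), a < b) and ℝ × ℝ carries the corresponding product topology, then there exists a sequence (Kₙ)_{n∈ℕ} of subsets of ℝ × ℝ with no subsequence converging in the sense of Kuratowski. -/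
open Set Topology TopologicalSpace

/-- The product topology of two copies of the Sorgenfrey line (the Sorgenfrey
plane). -/
def sorgenfreyPlaneTop : TopologicalSpace (ℝ × ℝ) :=
  TopologicalSpace.induced Prod.fst sorgenfreyTop ⊓
    TopologicalSpace.induced Prod.snd sorgenfreyTop

noncomputable def realToSetNat : ℝ ≃ Set ℕ :=
  Classical.choice (Cardinal.eq.mp (by
    rw [Cardinal.mk_real, Cardinal.mk_set, Cardinal.mk_nat, ← Cardinal.two_power_aleph0]))

lemma split_infinite (A : Set ℕ) (hA : A.Infinite) :
    ∃ B : Set ℕ, (A ∩ B).Infinite ∧ (A \ B).Infinite := by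
  have hA' : (setOf (· ∈ A)).Infinite := hA
  have hinj : Function.Injective (Nat.nth (· ∈ A)) := Nat.nth_injective hA'
  set B := Set.range (fun k => Nat.nth (· ∈ A) (2 * k)) with hB
  refine ⟨B, ?_, ?_⟩
  · have : Set.range (fun k => Nat.nth (· ∈ A) (2 * k)) ⊆ A ∩ B := by
      rintro n ⟨k, rfl⟩
      exact ⟨Nat.nth_mem_of_infinite hA' _, ⟨k, rfl⟩⟩
    exact (Set.infinite_range_of_injective (fun a b h => by
      have := hinj h; omega)).mono this
  · have hsub : Set.range (fun k => Nat.nth (· ∈ A) (2 * k + 1)) ⊆ A \ B := by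
      rintro n ⟨k, rfl⟩
      refine ⟨Nat.nth_mem_of_infinite hA' _, ?_⟩
      rintro ⟨j, hj⟩
      have := hinj hj
      omega
    exact (Set.infinite_range_of_injective (fun a b h => by
      have := hinj h; omega)).mono hsub

/-- The Sorgenfrey plane does not have the generalized Bolzano–Weierstrass
property. -/
theorem stmt18 :
    ∃ K : ℕ → Set (ℝ × ℝ), ∀ A : Set ℕ, A.Infinite →
      kurLi sorgenfreyPlaneTop K A ≠ kurLs sorgenfreyPlaneTop K A := by
  classical
  refine ⟨fun n => {p : ℝ × ℝ | p.2 = -p.1 ∧ n ∈ realToSetNat p.1}, fun A hA h => ?_⟩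
  obtain ⟨B, hAB, hAB'⟩ := split_infinite A hA
  set x : ℝ := realToSetNat.symm B with hxdef
  have hex : realToSetNat x = B := realToSetNat.apply_symm_apply B
  -- the point (x, -x) is in Ls
  have hLs : (x, -x) ∈ kurLs sorgenfreyPlaneTop
      (fun n => {p : ℝ × ℝ | p.2 = -p.1 ∧ n ∈ realToSetNat p.1}) A := by
    intro U hU hxU
    refine hAB.mono ?_
    rintro n ⟨hnA, hnB⟩
    exact ⟨hnA, ⟨(x, -x), hxU, rfl, by rw [hex]; exact hnB⟩⟩
  -- the point (x, -x) is not in Li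
  have hU0 : IsOpen[sorgenfreyPlaneTop]
      ((Prod.fst ⁻¹' Set.Ico x (x + 1)) ∩ (Prod.snd ⁻¹' Set.Ico (-x) (-x + 1))) := by
    apply @IsOpen.inter _ sorgenfreyPlaneTop
    · refine IsOpen.mono ?_ (inf_le_left)
      exact ⟨Set.Ico x (x + 1),
        TopologicalSpace.isOpen_generateFrom_of_mem ⟨x, x + 1, by linarith, rfl⟩, rfl⟩
    · refine IsOpen.mono ?_ (inf_le_right)
      exact ⟨Set.Ico (-x) (-x + 1),
        TopologicalSpace.isOpen_generateFrom_of_mem ⟨-x, -x + 1, by linarith, rfl⟩, rfl⟩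
  have hLi : (x, -x) ∉ kurLi sorgenfreyPlaneTop
      (fun n => {p : ℝ × ℝ | p.2 = -p.1 ∧ n ∈ realToSetNat p.1}) A := by
    intro hmem
    have hpt : (x, -x) ∈ (Prod.fst ⁻¹' Set.Ico x (x + 1)) ∩
        (Prod.snd ⁻¹' Set.Ico (-x) (-x + 1)) := by
      constructor <;> simp [Set.mem_Ico]
    have hfin := hmem _ hU0 hpt
    refine (hAB'.mono ?_) hfin
    rintro n ⟨hnA, hnB⟩
    refine ⟨hnA, Set.eq_empty_iff_forall_notMem.mpr ?_⟩
    rintro ⟨y₁, y₂⟩ ⟨⟨⟨h1, h2⟩, ⟨h3, h4⟩⟩, hy, hn⟩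
    simp only at hy h1 h2 h3 h4 hn
    have hy1 : y₁ = x := le_antisymm (by rw [hy] at h3; linarith) h1
    rw [hy1, hex] at hn
    exact hnB hn
  rw [h] at hLi
  exact hLi hLs
end

section
/- Assume there is a splitting family of subsets of ℕ of cardinality ℵ₁ (i.e., 𝔰 = ℵ₁). Let X be a regular Hausdorff space in which every sequence of subsets has a subsequence converging in the sense of Kuratowski. Then either X is hereditarily Lindelöf, or X contains an S-space, i.e., an uncountable subspace Y that is hereditarily separable (every subspace of Y is separable) but not Lindelöf. -/
open Set Topology TopologicalSpace

namespace Stmt19Aux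

noncomputable section

abbrev W : Type := (Cardinal.aleph 1).ord.ToType

lemma countable_Iio (a : W) : (Set.Iio a).Countable :=
  (Cardinal.countable_iff_lt_aleph_one _).2 (Cardinal.mk_Iio_ord_toType a)

lemma countable_Iic (a : W) : (Set.Iic a).Countable := by
  rw [← Set.Iio_insert]
  exact (countable_Iio a).insert a

lemma not_countable_univ : ¬ (Set.univ : Set W).Countable := by
  rw [Cardinal.countable_iff_lt_aleph_one, Cardinal.mk_univ, Cardinal.mk_ord_toType]
  exact lt_irrefl _

lemma exists_bound {T : Set W} (hT : T.Countable) : ∃ a : W, ∀ b ∈ T, b < a := by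
  by_contra hc
  push_neg at hc
  apply not_countable_univ
  have hsub : (Set.univ : Set W) ⊆ ⋃ b ∈ T, Set.Iic b := by
    intro a _
    obtain ⟨b, hbT, hab⟩ := hc a
    exact Set.mem_biUnion hbT hab
  exact ((hT.biUnion fun b _ => countable_Iic b).mono hsub)

lemma exists_pick {X : Type*} (Z : Set X) (F : Set X → Set X)
    (h : ∀ c, c ⊆ Z → c.Countable → (Z \ F c).Nonempty) :
    ∃ f : W → X, ∀ a, f a ∈ Z ∧ f a ∉ F (f '' Set.Iio a) := by
  classical
  obtain ⟨x₀, -⟩ := h ∅ (Set.empty_subset _) Set.countable_empty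
  let pick : Set X → X := fun c => if hc : (Z \ F c).Nonempty then hc.some else x₀
  have wf : WellFounded ((· < ·) : W → W → Prop) := IsWellFounded.wf
  let f : W → X := wf.fix (fun a ih => pick {x | ∃ b, ∃ hb : b < a, ih b hb = x})
  have hfeq : ∀ a : W, f a = pick {x | ∃ b, ∃ _ : b < a, f b = x} := fun a =>
    WellFounded.fix_eq _ _ a
  have himg : ∀ a : W, {x | ∃ b, ∃ _ : b < a, f b = x} = f '' Set.Iio a := by
    intro a
    ext x
    simp [Set.mem_image, eq_comm]
  refine ⟨f, ?_⟩
  intro a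
  refine wf.induction (C := fun a => f a ∈ Z ∧ f a ∉ F (f '' Set.Iio a)) a ?_
  intro a IH
  have hsub : f '' Set.Iio a ⊆ Z := by
    rintro x ⟨b, hb, rfl⟩
    exact (IH b hb).1
  have hcnt : (f '' Set.Iio a).Countable := (countable_Iio a).image f
  have hne' : (Z \ F (f '' Set.Iio a)).Nonempty := h _ hsub hcnt
  have heq : f a = pick (f '' Set.Iio a) := by rw [hfeq a, himg a]
  rw [heq]
  have hpe : pick (f '' Set.Iio a) = hne'.some := dif_pos hne'
  rw [hpe]
  exact ⟨hne'.some_mem.1, hne'.some_mem.2⟩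

lemma no_discrete {X : Type*} [t : TopologicalSpace X] {S : Set (Set ℕ)}
    (hsplit : IsSplittingFamily S)
    (hGBW : ∀ K : ℕ → Set X, ∃ A : Set ℕ, A.Infinite ∧ kurLi t K A = kurLs t K A)
    (p : S → X) (N : S → Set X)
    (hNo : ∀ s, IsOpen (N s)) (hNm : ∀ s, p s ∈ N s)
    (hsep : ∀ s s' : S, s ≠ s' → p s' ∉ N s) : False := by
  set K : ℕ → Set X := fun n => p '' {s : S | n ∈ (s : Set ℕ)} with hK
  obtain ⟨A, hA, hLiLs⟩ := hGBW K
  obtain ⟨s₀, hs₀S, hi1, hi2⟩ := hsplit A hA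
  set s : S := ⟨s₀, hs₀S⟩ with hs
  have hLs : p s ∈ kurLs t K A := by
    intro U hU hxU
    refine hi1.mono ?_
    rintro n ⟨hnA, hns⟩
    exact ⟨hnA, ⟨p s, hxU, ⟨s, hns, rfl⟩⟩⟩
  have hLi : p s ∈ kurLi t K A := by rw [hLiLs]; exact hLs
  have hfin := hLi (N s) (hNo s) (hNm s)
  refine hi2 (hfin.subset ?_)
  rintro n ⟨hnA, hns⟩
  refine ⟨hnA, ?_⟩
  rw [Set.eq_empty_iff_forall_notMem]
  rintro x ⟨hxN, σ, hnσ, rfl⟩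
  by_cases hσ : σ = s
  · subst hσ; exact hns hnσ
  · exact hsep s σ (Ne.symm hσ) hxN

end

end Stmt19Aux

open Stmt19Aux in
/-- Assume `𝔰 = ℵ₁`, i.e. there is a splitting family of cardinality `ℵ₁`.
A regular Hausdorff space with the generalized Bolzano–Weierstrass property
is either hereditarily Lindelöf or contains an S-space: an uncountable
hereditarily separable non-Lindelöf subspace. -/
theorem stmt19 {X : Type*} [t : TopologicalSpace X] [T3Space X]
    (hs : ∃ S : Set (Set ℕ), IsSplittingFamily S ∧ Cardinal.mk S = Cardinal.aleph 1)
    (hGBW : ∀ K : ℕ → Set X, ∃ A : Set ℕ, A.Infinite ∧ kurLi t K A = kurLs t K A) :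
    (∀ Y : Set X, IsLindelof Y) ∨
      ∃ Y : Set X, ¬ Y.Countable ∧
        (∀ Z : Set X, Z ⊆ Y → ∃ c : Set X, c ⊆ Z ∧ c.Countable ∧ Z ⊆ closure c) ∧
        ¬ IsLindelof Y := by
  classical
  by_cases hL : ∀ Y : Set X, IsLindelof Y
  · exact Or.inl hL
  right
  push_neg at hL
  obtain ⟨Y₀, hY₀⟩ := hL
  obtain ⟨S, hsplit, hcard⟩ := hs
  -- Extract a "pointed" open cover of Y₀ with no countable subcover
  obtain ⟨V, hVo, hVmem, hVnosub⟩ :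
      ∃ V : X → Set X, (∀ x, IsOpen (V x)) ∧ (∀ x ∈ Y₀, x ∈ V x) ∧
        ∀ T : Set X, T.Countable → ¬ Y₀ ⊆ ⋃ x ∈ T, V x := by
    by_contra hc
    push_neg at hc
    refine hY₀ (isLindelof_of_countable_subcover ?_)
    intro ι U hUo hUcov
    choose ix hix using fun (x : X) (hx : x ∈ Y₀) => Set.mem_iUnion.1 (hUcov hx)
    set V : X → Set X := fun x => if hx : x ∈ Y₀ then U (ix x hx) else ∅ with hV
    have hVo' : ∀ x, IsOpen (V x) := by
      intro x
      by_cases hx : x ∈ Y₀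
      · simpa [hV, dif_pos hx] using hUo _
      · simp [hV, dif_neg hx]
    have hVmem' : ∀ x ∈ Y₀, x ∈ V x := by
      intro x hx
      simpa [hV, dif_pos hx] using hix x hx
    obtain ⟨T, hTc, hTcov⟩ := hc V hVo' hVmem'
    have hTY : (T ∩ Y₀).Countable := hTc.mono Set.inter_subset_left
    haveI := hTY.to_subtype
    refine ⟨Set.range (fun q : ↥(T ∩ Y₀) => ix q.1 q.2.2), Set.countable_range _, ?_⟩
    intro x hx
    obtain ⟨w, hwT, hxVw⟩ := Set.mem_iUnion₂.1 (hTcov hx)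
    have hwY : w ∈ Y₀ := by
      by_contra hw
      simp [hV, dif_neg hw] at hxVw
    refine Set.mem_iUnion₂.2 ⟨ix w hwY, ⟨⟨w, hwT, hwY⟩, rfl⟩, ?_⟩
    simpa [hV, dif_pos hwY] using hxVw
  -- Transfinite sequence y : W → X, right-separated by the V's
  obtain ⟨y, hy⟩ := exists_pick Y₀ (fun c => ⋃ x ∈ c, V x) (by
    intro c hcZ hcc
    rw [Set.diff_nonempty]
    exact hVnosub c hcc)
  have hyY₀ : ∀ a, y a ∈ Y₀ := fun a => (hy a).1
  have hyV : ∀ {b a : W}, b < a → y a ∉ V (y b) := by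
    intro b a hba hmem
    exact (hy a).2 (Set.mem_biUnion (Set.mem_image_of_mem y hba) hmem)
  have hyinj : Function.Injective y := by
    intro a b hab
    by_contra hne
    rcases lt_or_gt_of_ne hne with h | h
    · exact hyV h (hab ▸ hVmem _ (hyY₀ a))
    · exact hyV h (hab.symm ▸ hVmem _ (hyY₀ b))
  refine ⟨Set.range y, ?_, ?_, ?_⟩
  · -- uncountable
    intro hcnt
    haveI := hcnt.to_subtype
    have hWc : Countable W :=
      Function.Injective.countable (f := fun a : W => (⟨y a, Set.mem_range_self a⟩ : ↥(Set.range y)))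
        (fun a b hab => hyinj (congrArg Subtype.val hab))
    exact not_countable_univ (Set.countable_univ (α := W))
  · -- hereditarily separable
    intro Z hZY
    by_contra hns
    push_neg at hns
    obtain ⟨z, hz⟩ := exists_pick Z closure (by
      intro c hcZ hcc
      rw [Set.diff_nonempty]
      exact hns c hcZ hcc)
    have hzZ : ∀ e, z e ∈ Z := fun e => (hz e).1
    have hzcl : ∀ e, z e ∉ closure (z '' Set.Iio e) := fun e => (hz e).2
    have hzinj : Function.Injective z := by
      intro d e hde
      by_contra hne
      rcases lt_or_gt_of_ne hne with h | h
      · exact hzcl e (hde ▸ subset_closure (Set.mem_image_of_mem z h))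
      · exact hzcl d (hde ▸ subset_closure (Set.mem_image_of_mem z h))
    choose β hβ using fun e => hZY (hzZ e)
    have hβinj : Function.Injective β := by
      intro d e h
      apply hzinj
      rw [← hβ d, ← hβ e, h]
    -- the club of closure points of β and β⁻¹
    set C : Set W := {e : W | ∀ d, d < e → β d < e ∧ ∀ c, β c = d → c < e} with hC
    have hBcnt : ∀ w : W, ((β '' Set.Iic w) ∪ (β ⁻¹' Set.Iic w) ∪ {w}).Countable := by
      intro w
      exact (((countable_Iic w).image β).union ((countable_Iic w).preimage hβinj)).union
        (Set.countable_singleton w)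
    choose hfun hhfun using fun w : W => exists_bound (hBcnt w)
    have hlt : ∀ w : W, w < hfun w := fun w =>
      hhfun w w (Set.mem_union_right _ rfl)
    have hβlt : ∀ {d w : W}, d ≤ w → β d < hfun w := fun {d w} h =>
      hhfun w (β d) (Set.mem_union_left _ (Set.mem_union_left _ ⟨d, h, rfl⟩))
    have hβinv : ∀ {c d w : W}, β c = d → d ≤ w → c < hfun w := fun {c d w} h1 h2 =>
      hhfun w c (Set.mem_union_left _ (Set.mem_union_right _ (by
        simp only [Set.mem_preimage, h1]; exact h2)))
    have hCunb : ∀ w₀ : W, ∃ e ∈ C, w₀ < e := by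
      intro w₀
      set seq : ℕ → W := fun n => hfun^[n] w₀ with hseq
      have hseqsucc : ∀ n, seq (n + 1) = hfun (seq n) := fun n =>
        Function.iterate_succ_apply' hfun n w₀
      obtain ⟨u, hu⟩ := exists_bound (Set.countable_range seq)
      have hUB : ∃ x : W, ∀ n, seq n < x := ⟨u, fun n => hu _ (Set.mem_range_self n)⟩
      set UB : Set W := {x : W | ∀ n, seq n < x} with hUBdef
      have wf : WellFounded ((· < ·) : W → W → Prop) := IsWellFounded.wf
      set e : W := wf.min UB hUB with he
      have heUB : ∀ n, seq n < e := wf.min_mem UB hUB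
      have hbelow : ∀ d, d < e → ∃ n, d ≤ seq n := by
        intro d hd
        by_contra hcon
        push_neg at hcon
        exact wf.not_lt_min UB (x := d) (fun n => hcon n) hd
      refine ⟨e, ?_, lt_of_le_of_lt (le_of_eq rfl) (heUB 0)⟩
      intro d hd
      obtain ⟨n, hn⟩ := hbelow d hd
      constructor
      · calc β d < hfun (seq n) := hβlt hn
          _ = seq (n + 1) := (hseqsucc n).symm
          _ < e := heUB (n + 1)
      · intro c hc
        calc c < hfun (seq n) := hβinv hc hn
          _ = seq (n + 1) := (hseqsucc n).symm
          _ < e := heUB (n + 1)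
    have hCbig : Cardinal.aleph 1 ≤ Cardinal.mk C := by
      by_contra hlt'
      push_neg at hlt'
      have hCcnt : C.Countable := (Cardinal.countable_iff_lt_aleph_one C).2 hlt'
      obtain ⟨a, ha⟩ := exists_bound hCcnt
      obtain ⟨e, heC, hae⟩ := hCunb a
      exact absurd (ha e heC) (not_lt_of_gt hae)
    -- order fact on C
    have horder : ∀ {d e : W}, d ∈ C → e ∈ C → d < e → β d < β e := by
      intro d e hdC heC hde
      have h1 : β d < e := (heC d hde).1
      have h2 : e ≤ β e := by
        by_contra hcon
        push_neg at hcon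
        exact absurd ((heC (β e) hcon).2 e rfl) (lt_irrefl e)
      exact lt_of_lt_of_le h1 h2
    -- embed S into C
    obtain ⟨emb⟩ : Nonempty (S ↪ C) := by
      rw [← Cardinal.le_def, hcard]
      exact hCbig
    set p : S → X := fun s => z ((emb s : C) : W) with hp
    set N : S → Set X := fun s =>
      (closure (z '' Set.Iio ((emb s : C) : W)))ᶜ ∩ V (z ((emb s : C) : W)) with hN
    refine absurd (no_discrete hsplit hGBW p N ?_ ?_ ?_) not_false
    · intro s
      exact (isClosed_closure.isOpen_compl).inter (hVo _)
    · intro s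
      refine ⟨hzcl _, ?_⟩
      have h1 : y (β ((emb s : C) : W)) ∈ V (y (β ((emb s : C) : W))) :=
        hVmem _ (hyY₀ _)
      rw [hβ ((emb s : C) : W)] at h1
      exact h1
    · intro s s' hss'
      have hne : ((emb s : C) : W) ≠ ((emb s' : C) : W) := by
        intro h
        exact hss' (emb.injective (Subtype.ext h))
      rcases lt_or_gt_of_ne hne with h | h
      · -- emb s < emb s' : use the V-separation
        have hb : β ((emb s : C) : W) < β ((emb s' : C) : W) :=
          horder (emb s).2 (emb s').2 h
        intro hmem
        have : z ((emb s' : C) : W) ∉ V (z ((emb s : C) : W)) := by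
          have h2 := hyV hb
          rw [hβ ((emb s : C) : W), hβ ((emb s' : C) : W)] at h2
          exact h2
        exact this hmem.2
      · -- emb s' < emb s : use the closure separation
        intro hmem
        exact hmem.1 (subset_closure (Set.mem_image_of_mem z h))
  · -- not Lindelöf
    intro hLin
    obtain ⟨r, hrc, hrcov⟩ := hLin.elim_countable_subcover (fun a : W => V (y a))
      (fun a => hVo _) (by
        intro x hx
        obtain ⟨a, rfl⟩ := hx
        exact Set.mem_iUnion.2 ⟨a, hVmem _ (hyY₀ a)⟩)
    obtain ⟨a, ha⟩ := exists_bound hrc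
    obtain ⟨b, hbr, hmem⟩ := Set.mem_iUnion₂.1 (hrcov (Set.mem_range_self a))
    exact hyV (ha b hbr) hmem
end
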